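/- arXiv:2412.08413 — 5 statements merged into one kernel-verified Lean document; each statement's English description precedes it below -/
import Mathlib

section
/- Let I = [σ, ρ]_L be a left weak Bruhat interval in S_n and let P_I be the associated regular poset. Suppose i ≼_{P_I} i+1 is a comparable, non-covering pair. Then the map γ ↦ γ s_i is a descent-preserving poset isomorphism from (I, ≼_L) to (I s_i, ≼_L), i.e., Des_L(γ) = Des_L(γ s_i) for all γ ∈ I. -/
/-- The adjacent transposition `s_i` of `Fin n` (0-indexed), swapping `i` and `i+1`. -/
def adj (n i : ℕ) (h : i + 1 < n) : Equiv.Perm (Fin n) :=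
  Equiv.swap ⟨i, Nat.lt_of_succ_lt h⟩ ⟨i + 1, h⟩

/-- A permutation is an adjacent transposition. -/
def IsAdj (n : ℕ) (π : Equiv.Perm (Fin n)) : Prop :=
  ∃ i, ∃ h : i + 1 < n, π = adj n i h

/-- Coxeter length: the minimal number of adjacent transpositions needed to express `σ`. -/
noncomputable def len {n : ℕ} (σ : Equiv.Perm (Fin n)) : ℕ :=
  sInf {k | ∃ l : List (Equiv.Perm (Fin n)),
    (∀ π ∈ l, IsAdj n π) ∧ l.prod = σ ∧ l.length = k}

/-- The left descent set of `σ` (0-indexed). -/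
def DesL {n : ℕ} (σ : Equiv.Perm (Fin n)) : Set ℕ :=
  {i | ∃ h : i + 1 < n, len (adj n i h * σ) < len σ}

/-- The right descent set of `σ` (0-indexed). -/
def DesR {n : ℕ} (σ : Equiv.Perm (Fin n)) : Set ℕ :=
  {i | ∃ h : i + 1 < n, len (σ * adj n i h) < len σ}

/-- Covering relation of the left weak Bruhat order: `σ ⋖ s_i σ` for `i ∉ Des_L(σ)`. -/
def covL {n : ℕ} (σ ρ : Equiv.Perm (Fin n)) : Prop :=
  ∃ i, ∃ h : i + 1 < n, i ∉ DesL σ ∧ ρ = adj n i h * σ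

/-- The left weak Bruhat order. -/
def leL {n : ℕ} (σ ρ : Equiv.Perm (Fin n)) : Prop :=
  Relation.ReflTransGen covL σ ρ

/-- Covering relation of the right weak Bruhat order: `σ ⋖ σ s_i` for `i ∉ Des_R(σ)`. -/
def covR {n : ℕ} (σ ρ : Equiv.Perm (Fin n)) : Prop :=
  ∃ i, ∃ h : i + 1 < n, i ∉ DesR σ ∧ ρ = σ * adj n i h

/-- The right weak Bruhat order. -/
def leR {n : ℕ} (σ ρ : Equiv.Perm (Fin n)) : Prop :=
  Relation.ReflTransGen covR σ ρ

/-- The left weak Bruhat interval `[σ, ρ]_L`. -/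
def intervalL {n : ℕ} (σ ρ : Equiv.Perm (Fin n)) : Set (Equiv.Perm (Fin n)) :=
  {γ | leL σ γ ∧ leL γ ρ}

/-- The right weak Bruhat interval `[σ, ρ]_R`. -/
def intervalR {n : ℕ} (σ ρ : Equiv.Perm (Fin n)) : Set (Equiv.Perm (Fin n)) :=
  {γ | leR σ γ ∧ leR γ ρ}

/-- The parabolic subgroup of `S_n` generated by `{s_i | i ∈ S}`. -/
def parabolic (n : ℕ) (S : Set ℕ) : Subgroup (Equiv.Perm (Fin n)) :=
  Subgroup.closure {π | ∃ i ∈ S, ∃ h : i + 1 < n, π = adj n i h}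

/-- `w` is a longest element of the set `A` of permutations. -/
def IsLongestIn {n : ℕ} (A : Set (Equiv.Perm (Fin n))) (w : Equiv.Perm (Fin n)) : Prop :=
  w ∈ A ∧ ∀ u ∈ A, len u ≤ len w

/-- A poset with ground set `Fin n` (`[n]`, 0-indexed). -/
structure FinPoset (n : ℕ) where
  le : Fin n → Fin n → Prop
  refl : ∀ a, le a a
  trans : ∀ a b c, le a b → le b c → le a c
  antisymm : ∀ a b, le a b → le b a → a = b

/-- `Σ_L(P)`: the permutations `σ` with `σ(i) ≤ σ(j)` whenever `i ≼_P j`. -/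
def SigmaL {n : ℕ} (P : FinPoset n) : Set (Equiv.Perm (Fin n)) :=
  {σ | ∀ i j : Fin n, P.le i j → σ i ≤ σ j}

/-- `P` is regular: whenever `x ≼_P z` and `y` lies strictly between `x` and `z` in the
integer order, `x ≼_P y` or `y ≼_P z`. -/
def Regular {n : ℕ} (P : FinPoset n) : Prop :=
  ∀ x y z : Fin n, P.le x z → ((x < y ∧ y < z) ∨ (z < y ∧ y < x)) →
    P.le x y ∨ P.le y z

/-- The poset `σ · P`, obtained by relabelling: `i ≼ j` iff `σ⁻¹(i) ≼_P σ⁻¹(j)`. -/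
def permPoset {n : ℕ} (σ : Equiv.Perm (Fin n)) (P : FinPoset n) : FinPoset n where
  le i j := P.le (σ⁻¹ i) (σ⁻¹ j)
  refl _ := P.refl _
  trans _ _ _ h1 h2 := P.trans _ _ _ h1 h2
  antisymm _ _ h1 h2 := σ⁻¹.injective (P.antisymm _ _ h1 h2)

/-- `b` covers `a` in `P`. -/
def Covers {n : ℕ} (P : FinPoset n) (a b : Fin n) : Prop :=
  a ≠ b ∧ P.le a b ∧ ¬ ∃ c, c ≠ a ∧ c ≠ b ∧ P.le a c ∧ P.le c b

/-- `a` and `b` are comparable in `P`. -/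
def Cmp {n : ℕ} (P : FinPoset n) (a b : Fin n) : Prop :=
  P.le a b ∨ P.le b a

namespace Stmt12Aux
open Finset

variable {n : ℕ}

/-- The (position-pair) inversion set of a permutation. -/
def Inv (w : Equiv.Perm (Fin n)) : Finset (Fin n × Fin n) :=
  Finset.univ.filter (fun p => p.1 < p.2 ∧ w p.2 < w p.1)

lemma mem_Inv {w : Equiv.Perm (Fin n)} {p : Fin n × Fin n} :
    p ∈ Inv w ↔ p.1 < p.2 ∧ w p.2 < w p.1 := by simp [Inv]

lemma swap_lt_iff {a b : Fin n} (hab : (a : ℕ) + 1 = (b : ℕ)) {u v : Fin n}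
    (h1 : ¬(u = a ∧ v = b)) (h2 : ¬(u = b ∧ v = a)) :
    Equiv.swap a b u < Equiv.swap a b v ↔ u < v := by
  simp only [Equiv.swap_apply_def]
  split_ifs <;> simp only [Fin.lt_def, Fin.ext_iff] at * <;> omega

lemma card_filter_lt (x : Fin n) :
    (Finset.univ.filter (fun y => y < x)).card = (x : ℕ) := by
  have : Finset.univ.filter (fun y => y < x) = Finset.Iio x := by ext z; simp
  rw [this, Fin.card_Iio]

lemma val_eq_card (w : Equiv.Perm (Fin n)) (x : Fin n) :
    ((w x : Fin n) : ℕ) = (Finset.univ.filter (fun y => w y < w x)).card := by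
  have h : Finset.image w (Finset.univ.filter (fun y => w y < w x))
      = Finset.univ.filter (fun z => z < w x) := by
    ext z
    simp only [Finset.mem_image, Finset.mem_filter, Finset.mem_univ, true_and]
    constructor
    · rintro ⟨y, hy, rfl⟩; exact hy
    · intro hz; exact ⟨w⁻¹ z, by simpa using hz, by simp⟩
  have h2 := Finset.card_image_of_injective
    (Finset.univ.filter (fun y => w y < w x)) w.injective
  rw [h, card_filter_lt] at h2
  omega

lemma eq_of_Inv_eq {u v : Equiv.Perm (Fin n)} (h : Inv u = Inv v) : u = v := by
  have key : ∀ x y : Fin n, (u y < u x ↔ v y < v x) := by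
    intro x y
    rcases lt_trichotomy x y with hxy | rfl | hxy
    · have h1 : ((x, y) ∈ Inv u ↔ u y < u x) := by simp [mem_Inv, hxy]
      have h2 : ((x, y) ∈ Inv v ↔ v y < v x) := by simp [mem_Inv, hxy]
      rw [← h1, ← h2, h]
    · simp
    · have h1 : ((y, x) ∈ Inv u ↔ u x < u y) := by simp [mem_Inv, hxy]
      have h2 : ((y, x) ∈ Inv v ↔ v x < v y) := by simp [mem_Inv, hxy]
      have hu : u x ≠ u y := fun e => hxy.ne' (u.injective e)
      have hv : v x ≠ v y := fun e => hxy.ne' (v.injective e)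
      constructor
      · intro hlt
        have : (y, x) ∉ Inv u := by rw [h1]; exact fun hh => absurd hlt (asymm hh)
        rw [h, h2] at this
        rcases lt_or_gt_of_ne hv with h' | h'
        · exact absurd h' this
        · exact h'
      · intro hlt
        have : (y, x) ∉ Inv v := by rw [h2]; exact fun hh => absurd hlt (asymm hh)
        rw [← h, h1] at this
        rcases lt_or_gt_of_ne hu with h' | h'
        · exact absurd h' this
        · exact h'
  apply Equiv.ext
  intro x
  apply Fin.ext
  rw [val_eq_card u x, val_eq_card v x]
  congr 1
  apply Finset.filter_congr
  intro y _
  simp [key x y]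



lemma adj_sq {j : ℕ} (h : j + 1 < n) : adj n j h * adj n j h = 1 :=
  Equiv.swap_mul_self _ _

lemma adj_inv {j : ℕ} (h : j + 1 < n) : (adj n j h)⁻¹ = adj n j h :=
  Equiv.swap_inv _ _

lemma adj_mul_apply {j : ℕ} (h : j + 1 < n) (w : Equiv.Perm (Fin n)) (x : Fin n) :
    (adj n j h * w) x = Equiv.swap ⟨j, Nat.lt_of_succ_lt h⟩ ⟨j + 1, h⟩ (w x) := rfl

/-- Left multiplication by `s_j` when the value `j` sits before `j+1`. -/
lemma Inv_adj_mul {j : ℕ} (h : j + 1 < n) (w : Equiv.Perm (Fin n))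
    (hab : w⁻¹ ⟨j, Nat.lt_of_succ_lt h⟩ < w⁻¹ ⟨j + 1, h⟩) :
    (w⁻¹ ⟨j, Nat.lt_of_succ_lt h⟩, w⁻¹ ⟨j + 1, h⟩) ∉ Inv w ∧
    Inv (adj n j h * w) =
      insert (w⁻¹ ⟨j, Nat.lt_of_succ_lt h⟩, w⁻¹ ⟨j + 1, h⟩) (Inv w) := by
  set jf : Fin n := ⟨j, Nat.lt_of_succ_lt h⟩ with hjf
  set jf1 : Fin n := ⟨j + 1, h⟩ with hjf1
  have hjlt : jf < jf1 := by simp [hjf, hjf1, Fin.lt_def]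
  set a := w⁻¹ jf with haa
  set b := w⁻¹ jf1 with hbb
  have hwa : w a = jf := w.apply_symm_apply jf
  have hwb : w b = jf1 := w.apply_symm_apply jf1
  constructor
  · intro hmem
    rw [mem_Inv] at hmem
    rw [hwa, hwb] at hmem
    exact absurd hjlt (asymm hmem.2)
  · ext ⟨x, y⟩
    simp only [Finset.mem_insert, mem_Inv, Prod.mk.injEq, adj_mul_apply]
    constructor
    · rintro ⟨hxy, hlt⟩
      by_cases hc : x = a ∧ y = b
      · exact Or.inl hc
      · refine Or.inr ⟨hxy, ?_⟩
        rw [swap_lt_iff (by simp [hjf, hjf1])] at hlt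
        · exact hlt
        · rintro ⟨e1, e2⟩
          have hy : y = a := by apply w.injective; rw [hwa]; exact e1
          have hx : x = b := by apply w.injective; rw [hwb]; exact e2
          rw [hx, hy] at hxy
          exact absurd hab (asymm hxy)
        · rintro ⟨e1, e2⟩
          have hy : y = b := by apply w.injective; rw [hwb]; exact e1
          have hx : x = a := by apply w.injective; rw [hwa]; exact e2
          exact hc ⟨hx, hy⟩
    · rintro (⟨rfl, rfl⟩ | ⟨hxy, hlt⟩)
      · refine ⟨hab, ?_⟩
        rw [hwa, hwb, Equiv.swap_apply_left, Equiv.swap_apply_right]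
        exact hjlt
      · refine ⟨hxy, ?_⟩
        rw [swap_lt_iff (by simp [hjf, hjf1])]
        · exact hlt
        · rintro ⟨e1, e2⟩
          have hy : y = a := by apply w.injective; rw [hwa]; exact e1
          have hx : x = b := by apply w.injective; rw [hwb]; exact e2
          rw [hx, hy] at hxy
          exact absurd hab (asymm hxy)
        · rintro ⟨e1, e2⟩
          rw [e1, e2] at hlt
          exact absurd hjlt (asymm hlt)

/-- Left multiplication by `s_j` when the value `j+1` sits before `j`. -/
lemma Inv_adj_mul' {j : ℕ} (h : j + 1 < n) (w : Equiv.Perm (Fin n))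
    (hba : w⁻¹ ⟨j + 1, h⟩ < w⁻¹ ⟨j, Nat.lt_of_succ_lt h⟩) :
    (w⁻¹ ⟨j + 1, h⟩, w⁻¹ ⟨j, Nat.lt_of_succ_lt h⟩) ∉ Inv (adj n j h * w) ∧
    Inv w = insert (w⁻¹ ⟨j + 1, h⟩, w⁻¹ ⟨j, Nat.lt_of_succ_lt h⟩)
      (Inv (adj n j h * w)) := by
  set jf : Fin n := ⟨j, Nat.lt_of_succ_lt h⟩ with hjf
  set jf1 : Fin n := ⟨j + 1, h⟩ with hjf1
  set w' := adj n j h * w with hw'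
  have hinva : w'⁻¹ jf = w⁻¹ jf1 := by
    rw [hw', mul_inv_rev, adj_inv]
    simp [adj, Equiv.Perm.mul_apply, Equiv.swap_apply_left, hjf, hjf1]
  have hinvb : w'⁻¹ jf1 = w⁻¹ jf := by
    rw [hw', mul_inv_rev, adj_inv]
    simp [adj, Equiv.Perm.mul_apply, Equiv.swap_apply_right, hjf, hjf1]
  have hww : adj n j h * w' = w := by
    rw [hw', ← mul_assoc, adj_sq, one_mul]
  have := Inv_adj_mul h w' (by rw [hinva, hinvb]; exact hba)
  rw [hww, hinva, hinvb] at this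
  exact this

lemma Inv_one : Inv (1 : Equiv.Perm (Fin n)) = ∅ := by
  ext p
  simp only [mem_Inv, Equiv.Perm.coe_one, id_eq, Finset.notMem_empty, iff_false]
  rintro ⟨h1, h2⟩
  exact absurd h1 (asymm h2)

lemma perm_eq_one_of_strictMono {w : Equiv.Perm (Fin n)} (hw : StrictMono w) :
    w = 1 := by
  have hinv : StrictMono (w⁻¹ : Equiv.Perm (Fin n)) := by
    intro x y hxy
    rcases lt_trichotomy (w⁻¹ x) (w⁻¹ y) with hh | hh | hh
    · exact hh
    · have e := w⁻¹.injective hh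
      exact absurd hxy (by simp [e])
    · have := hw hh
      rw [Equiv.Perm.coe_inv, Equiv.apply_symm_apply, Equiv.apply_symm_apply] at this
      exact absurd hxy (asymm this)
  have hle : ∀ (u : Equiv.Perm (Fin n)), StrictMono u → ∀ x : Fin n, (x : ℕ) ≤ (u x : ℕ) := by
    intro u hu x
    rw [val_eq_card u x, ← card_filter_lt x]
    apply Finset.card_le_card
    intro y hy
    simp only [Finset.mem_filter, Finset.mem_univ, true_and] at hy ⊢
    exact hu hy
  apply Equiv.ext
  intro x
  have h1 := hle w hw x
  have h2 := hle _ hinv (w x)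
  rw [Equiv.Perm.coe_inv, Equiv.symm_apply_apply] at h2
  exact Fin.ext (le_antisymm h2 h1)

lemma exists_value_descent {w : Equiv.Perm (Fin n)} (hw : w ≠ 1) :
    ∃ j, ∃ h : j + 1 < n, w⁻¹ ⟨j + 1, h⟩ < w⁻¹ ⟨j, Nat.lt_of_succ_lt h⟩ := by
  by_contra hc
  push_neg at hc
  apply hw
  have hstep : ∀ j (h : j + 1 < n),
      (w⁻¹ : Equiv.Perm (Fin n)) ⟨j, Nat.lt_of_succ_lt h⟩ < w⁻¹ ⟨j + 1, h⟩ := by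
    intro j h
    rcases lt_trichotomy ((w⁻¹ : Equiv.Perm (Fin n)) ⟨j, Nat.lt_of_succ_lt h⟩)
      (w⁻¹ ⟨j + 1, h⟩) with hh | hh | hh
    · exact hh
    · exact absurd (w⁻¹.injective hh) (by simp [Fin.ext_iff])
    · exact absurd hh (not_lt.mpr (hc j h))
  have haux : ∀ m : ℕ, ∀ x y : Fin n, (y : ℕ) = (x : ℕ) + m + 1 →
      (w⁻¹ : Equiv.Perm (Fin n)) x < w⁻¹ y := by
    intro m
    induction m with
    | zero =>
      intro x y hxy
      have h : (x : ℕ) + 1 < n := by omega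
      have hx : x = ⟨(x : ℕ), Nat.lt_of_succ_lt h⟩ := Fin.ext rfl
      have hy : y = ⟨(x : ℕ) + 1, h⟩ := Fin.ext (show (y : ℕ) = (x : ℕ) + 1 by omega)
      rw [hx, hy]
      exact hstep _ h
    | succ m ih =>
      intro x y hxy
      have h : (x : ℕ) + m + 1 < n := by omega
      have hmid := ih x ⟨(x : ℕ) + m + 1, h⟩ rfl
      have h2 : (x : ℕ) + m + 1 + 1 < n := by omega
      have hy : y = ⟨(x : ℕ) + m + 1 + 1, h2⟩ := Fin.ext (show (y : ℕ) = (x : ℕ) + m + 1 + 1 by omega)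
      rw [hy]
      exact hmid.trans (hstep ((x : ℕ) + m + 1) h2)
  have hmono : StrictMono (w⁻¹ : Equiv.Perm (Fin n)) := by
    intro x y hxy
    have : (y : ℕ) = (x : ℕ) + ((y : ℕ) - (x : ℕ) - 1) + 1 := by
      rw [Fin.lt_def] at hxy; omega
    exact haux _ x y this
  have := perm_eq_one_of_strictMono hmono
  rw [← inv_inv w, this, inv_one]
lemma exists_word (w : Equiv.Perm (Fin n)) :
    ∃ l : List (Equiv.Perm (Fin n)),
      (∀ π ∈ l, IsAdj n π) ∧ l.prod = w ∧ l.length = (Inv w).card := by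
  generalize hk : (Inv w).card = k
  induction k using Nat.strong_induction_on generalizing w with
  | _ k ih =>
    by_cases hw : w = 1
    · subst hw
      refine ⟨[], by simp, by simp, ?_⟩
      rw [Inv_one] at hk
      simpa using hk.symm ▸ rfl
    · obtain ⟨j, h, hd⟩ := exists_value_descent hw
      obtain ⟨hnm, heq⟩ := Inv_adj_mul' h w hd
      have hcard : (Inv (adj n j h * w)).card + 1 = k := by
        rw [← hk, heq, Finset.card_insert_of_notMem hnm]
      obtain ⟨l, hl1, hl2, hl3⟩ := ih ((Inv (adj n j h * w)).card) (by omega) _ rfl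
      refine ⟨adj n j h :: l, ?_, ?_, ?_⟩
      · intro π hπ
        rcases List.mem_cons.mp hπ with rfl | hπ
        · exact ⟨j, h, rfl⟩
        · exact hl1 π hπ
      · rw [List.prod_cons, hl2, ← mul_assoc, adj_sq, one_mul]
      · simp only [List.length_cons, hl3]; omega

lemma card_le_word : ∀ l : List (Equiv.Perm (Fin n)), (∀ π ∈ l, IsAdj n π) →
    (Inv l.prod).card ≤ l.length := by
  intro l
  induction l with
  | nil => intro _; simp [Inv_one]
  | cons π l ih =>
    intro hl
    obtain ⟨j, h, rfl⟩ := hl π (List.mem_cons_self)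
    have hrec := ih (fun π hπ => hl π (List.mem_cons_of_mem _ hπ))
    rw [List.prod_cons, List.length_cons]
    set u := l.prod with hu
    have hne : u⁻¹ ⟨j, Nat.lt_of_succ_lt h⟩ ≠ u⁻¹ ⟨j + 1, h⟩ :=
      fun e => absurd (u⁻¹.injective e) (by simp [Fin.ext_iff])
    rcases lt_or_gt_of_ne hne with hlt | hgt
    · have := (Inv_adj_mul h u hlt).2
      rw [this, Finset.card_insert_of_notMem (Inv_adj_mul h u hlt).1]
      omega
    · have := (Inv_adj_mul' h u hgt).2
      have hc : (Inv u).card = (Inv (adj n j h * u)).card + 1 := by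
        rw [this, Finset.card_insert_of_notMem (Inv_adj_mul' h u hgt).1]
      omega

lemma len_eq (w : Equiv.Perm (Fin n)) : len w = (Inv w).card := by
  apply le_antisymm
  · obtain ⟨l, hl1, hl2, hl3⟩ := exists_word w
    exact Nat.sInf_le ⟨l, hl1, hl2, hl3⟩
  · have hne : {k | ∃ l : List (Equiv.Perm (Fin n)),
        (∀ π ∈ l, IsAdj n π) ∧ l.prod = w ∧ l.length = k}.Nonempty := by
      obtain ⟨l, hl1, hl2, hl3⟩ := exists_word w
      exact ⟨l.length, l, hl1, hl2, rfl⟩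
    obtain ⟨l, hl1, hl2, hl3⟩ := Nat.sInf_mem hne
    rw [len, ← hl3, ← hl2]
    exact card_le_word l hl1

lemma mem_DesL_iff {w : Equiv.Perm (Fin n)} {j : ℕ} (h : j + 1 < n) :
    j ∈ DesL w ↔ w⁻¹ ⟨j + 1, h⟩ < w⁻¹ ⟨j, Nat.lt_of_succ_lt h⟩ := by
  have hne : w⁻¹ ⟨j, Nat.lt_of_succ_lt h⟩ ≠ w⁻¹ ⟨j + 1, h⟩ :=
    fun e => absurd (w⁻¹.injective e) (by simp [Fin.ext_iff])
  constructor
  · rintro ⟨h', hlt⟩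
    rcases lt_or_gt_of_ne hne with hab | hba
    · exfalso
      obtain ⟨hnm, heq⟩ := Inv_adj_mul h w hab
      rw [len_eq, len_eq, heq, Finset.card_insert_of_notMem hnm] at hlt
      omega
    · exact hba
  · intro hd
    obtain ⟨hnm, heq⟩ := Inv_adj_mul' h w hd
    refine ⟨h, ?_⟩
    rw [len_eq, len_eq, heq, Finset.card_insert_of_notMem hnm]
    omega

lemma covL_inv_insert {u v : Equiv.Perm (Fin n)} (hc : covL u v) :
    ∃ p, p ∉ Inv u ∧ Inv v = insert p (Inv u) := by
  obtain ⟨j, h, hnd, rfl⟩ := hc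
  have hne : u⁻¹ ⟨j, Nat.lt_of_succ_lt h⟩ ≠ u⁻¹ ⟨j + 1, h⟩ :=
    fun e => absurd (u⁻¹.injective e) (by simp [Fin.ext_iff])
  have hab : u⁻¹ ⟨j, Nat.lt_of_succ_lt h⟩ < u⁻¹ ⟨j + 1, h⟩ := by
    rcases lt_or_gt_of_ne hne with hab | hba
    · exact hab
    · exact absurd ((mem_DesL_iff h).mpr hba) hnd
  obtain ⟨hnm, heq⟩ := Inv_adj_mul h u hab
  exact ⟨_, hnm, heq⟩
lemma leL_of_subset : ∀ k (u v : Equiv.Perm (Fin n)),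
    (Inv v \ Inv u).card = k → Inv u ⊆ Inv v → leL u v := by
  intro k
  induction k using Nat.strong_induction_on with
  | _ k ih =>
    intro u v hk hsub
    by_cases he : Inv v ⊆ Inv u
    · rw [eq_of_Inv_eq (Finset.Subset.antisymm hsub he)]
      exact Relation.ReflTransGen.refl
    · have hD : (Inv v \ Inv u).Nonempty := by
        rw [Finset.sdiff_nonempty]
        exact he
      obtain ⟨q, hq, hmin⟩ := Finset.exists_min_image (Inv v \ Inv u)
        (fun p => (u p.2 : ℕ) - (u p.1 : ℕ)) hD
      obtain ⟨a, b⟩ := q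
      have hqv : (a, b) ∈ Inv v := (Finset.mem_sdiff.mp hq).1
      have hqu : (a, b) ∉ Inv u := (Finset.mem_sdiff.mp hq).2
      have hab : a < b := (mem_Inv.mp hqv).1
      have hvba : v b < v a := (mem_Inv.mp hqv).2
      have huab : u a < u b := by
        rcases lt_or_gt_of_ne (fun e : u a = u b => absurd (u.injective e) hab.ne)
          with h' | h'
        · exact h'
        · exact absurd (mem_Inv.mpr ⟨hab, h'⟩) hqu
      -- key claim: u b = u a + 1
      have hkey : (u b : ℕ) = (u a : ℕ) + 1 := by
        by_contra hgap
        have hgap' : (u a : ℕ) + 1 < (u b : ℕ) := by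
          rw [Fin.lt_def] at huab; omega
        set m : Fin n := ⟨(u a : ℕ) + 1, lt_trans hgap' (u b).isLt⟩ with hm
        set c := u⁻¹ m with hc
        have hum : u c = m := u.apply_symm_apply m
        have hca : c ≠ a := fun e => by
          have h' : m = u a := by rw [← hum, e]
          have h'' : (u a : ℕ) + 1 = (u a : ℕ) := congrArg Fin.val h'
          omega
        have hcb : c ≠ b := fun e => by
          have h' : m = u b := by rw [← hum, e]
          have h'' : (u a : ℕ) + 1 = (u b : ℕ) := congrArg Fin.val h'
          omega
        have huam : u a < u c := by rw [hum]; exact Fin.lt_def.mpr (by simp [hm])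
        have humb : u c < u b := by rw [hum]; exact Fin.lt_def.mpr (by simpa [hm] using hgap')
        rcases lt_trichotomy c a with h1 | h1 | h1
        · -- c < a
          have hcu : (c, a) ∈ Inv u := mem_Inv.mpr ⟨h1, huam⟩
          have hcv := hsub hcu
          have hvac : v a < v c := (mem_Inv.mp hcv).2
          have hnew : (c, b) ∈ Inv v \ Inv u :=
            Finset.mem_sdiff.mpr ⟨mem_Inv.mpr ⟨h1.trans hab, hvba.trans hvac⟩,
              fun hh => absurd (mem_Inv.mp hh).2 (asymm humb)⟩
          have := hmin (c, b) hnew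
          simp only at this
          rw [Fin.lt_def] at huam humb
          omega
        · exact absurd h1 hca
        · rcases lt_trichotomy c b with h2 | h2 | h2
          · -- a < c < b
            by_cases hacv : (a, c) ∈ Inv v
            · have hnew : (a, c) ∈ Inv v \ Inv u :=
                Finset.mem_sdiff.mpr ⟨hacv,
                  fun hh => absurd (mem_Inv.mp hh).2 (asymm huam)⟩
              have := hmin (a, c) hnew
              simp only at this
              rw [Fin.lt_def] at huam humb
              omega
            · have hvac : v a < v c := by
                rcases lt_or_gt_of_ne
                  (fun e : v a = v c => absurd (v.injective e) h1.ne) with h' | h'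
                · exact h'
                · exact absurd (mem_Inv.mpr ⟨h1, h'⟩) hacv
              have hnew : (c, b) ∈ Inv v \ Inv u :=
                Finset.mem_sdiff.mpr ⟨mem_Inv.mpr ⟨h2, hvba.trans hvac⟩,
                  fun hh => absurd (mem_Inv.mp hh).2 (asymm humb)⟩
              have := hmin (c, b) hnew
              simp only at this
              rw [Fin.lt_def] at huam humb
              omega
          · exact absurd h2 hcb
          · -- b < c
            have hcu : (b, c) ∈ Inv u := mem_Inv.mpr ⟨h2, humb⟩
            have hcv := hsub hcu
            have hvcb : v c < v b := (mem_Inv.mp hcv).2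
            have hnew : (a, c) ∈ Inv v \ Inv u :=
              Finset.mem_sdiff.mpr ⟨mem_Inv.mpr ⟨hab.trans h2, hvcb.trans hvba⟩,
                fun hh => absurd (mem_Inv.mp hh).2 (asymm huam)⟩
            have := hmin (a, c) hnew
            simp only at this
            rw [Fin.lt_def] at huam humb
            omega
      -- now perform the step
      have hjn : (u a : ℕ) + 1 < n := hkey ▸ (u b).isLt
      set j : ℕ := (u a : ℕ) with hj
      have hua : u a = ⟨j, Nat.lt_of_succ_lt hjn⟩ := Fin.ext rfl
      have hub : u b = ⟨j + 1, hjn⟩ := Fin.ext hkey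
      have hia : u⁻¹ ⟨j, Nat.lt_of_succ_lt hjn⟩ = a := by rw [← hua]; exact u.symm_apply_apply a
      have hib : u⁻¹ ⟨j + 1, hjn⟩ = b := by rw [← hub]; exact u.symm_apply_apply b
      have hablt : u⁻¹ ⟨j, Nat.lt_of_succ_lt hjn⟩ < u⁻¹ ⟨j + 1, hjn⟩ := by
        rw [hia, hib]; exact hab
      obtain ⟨hnm, heq⟩ := Inv_adj_mul hjn u hablt
      have hnd : j ∉ DesL u := fun hd => by
        rw [mem_DesL_iff hjn, hia, hib] at hd
        exact absurd hab (asymm hd)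
      have hcov : covL u (adj n j hjn * u) := ⟨j, hjn, hnd, rfl⟩
      have hsub' : Inv (adj n j hjn * u) ⊆ Inv v := by
        rw [heq, hia, hib]
        exact Finset.insert_subset hqv hsub
      have hdiff : Inv v \ Inv (adj n j hjn * u) = (Inv v \ Inv u).erase (a, b) := by
        rw [heq, hia, hib, Finset.sdiff_insert]
      have hcard : (Inv v \ Inv (adj n j hjn * u)).card < k := by
        rw [hdiff, ← hk]
        exact Finset.card_erase_lt_of_mem hq
      exact Relation.ReflTransGen.head hcov
        (ih _ hcard (adj n j hjn * u) v rfl hsub')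

lemma leL_iff {u v : Equiv.Perm (Fin n)} : leL u v ↔ Inv u ⊆ Inv v := by
  constructor
  · intro hle
    induction hle with
    | refl => exact Finset.Subset.refl _
    | tail _ hbc ihsub =>
      obtain ⟨p, _, heq⟩ := covL_inv_insert hbc
      rw [heq]
      exact ihsub.trans (Finset.subset_insert _ _)
  · intro hsub
    exact leL_of_subset _ u v rfl hsub
/-- The key order-preservation fact for right multiplication by an adjacent swap. -/
lemma Inv_mul_swap_subset_iff {γ γ' : Equiv.Perm (Fin n)} {a b : Fin n}
    (hab : (a : ℕ) + 1 = (b : ℕ)) (h1 : γ a < γ b) (h2 : γ' a < γ' b) :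
    Inv (γ * Equiv.swap a b) ⊆ Inv (γ' * Equiv.swap a b) ↔ Inv γ ⊆ Inv γ' := by
  have hba : a < b := Fin.lt_def.mpr (by omega)
  constructor
  · intro hsub p hp
    obtain ⟨x, y⟩ := p
    obtain ⟨hxy, hlt⟩ := mem_Inv.mp hp
    have hpair : ¬(x = a ∧ y = b) := by
      rintro ⟨rfl, rfl⟩; exact absurd h1 (asymm hlt)
    have hpair2 : ¬(x = b ∧ y = a) := by
      rintro ⟨rfl, rfl⟩; exact absurd hxy (asymm hba)
    have hxy' : Equiv.swap a b x < Equiv.swap a b y :=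
      (swap_lt_iff hab hpair hpair2).mpr hxy
    have hmem : (Equiv.swap a b x, Equiv.swap a b y) ∈ Inv (γ * Equiv.swap a b) := by
      rw [mem_Inv]
      refine ⟨hxy', ?_⟩
      show γ (Equiv.swap a b (Equiv.swap a b y)) < γ (Equiv.swap a b (Equiv.swap a b x))
      rw [Equiv.swap_apply_self, Equiv.swap_apply_self]
      exact hlt
    have hres := mem_Inv.mp (hsub hmem)
    have hgl : γ' (Equiv.swap a b (Equiv.swap a b y))
        < γ' (Equiv.swap a b (Equiv.swap a b x)) := hres.2
    rw [Equiv.swap_apply_self, Equiv.swap_apply_self] at hgl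
    exact mem_Inv.mpr ⟨hxy, hgl⟩
  · intro hsub p hp
    obtain ⟨x, y⟩ := p
    obtain ⟨hxy, hlt0⟩ := mem_Inv.mp hp
    have hlt : γ (Equiv.swap a b y) < γ (Equiv.swap a b x) := hlt0
    by_cases hpair : x = a ∧ y = b
    · obtain ⟨rfl, rfl⟩ := hpair
      refine mem_Inv.mpr ⟨hxy, ?_⟩
      show γ' (Equiv.swap x y y) < γ' (Equiv.swap x y x)
      rw [Equiv.swap_apply_right, Equiv.swap_apply_left]
      exact h2
    · have hpair2 : ¬(x = b ∧ y = a) := by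
        rintro ⟨rfl, rfl⟩; exact absurd hxy (asymm hba)
      have hxy' : Equiv.swap a b x < Equiv.swap a b y :=
        (swap_lt_iff hab hpair hpair2).mpr hxy
      have hmem : (Equiv.swap a b x, Equiv.swap a b y) ∈ Inv γ :=
        mem_Inv.mpr ⟨hxy', hlt⟩
      have hres := mem_Inv.mp (hsub hmem)
      refine mem_Inv.mpr ⟨hxy, ?_⟩
      show γ' (Equiv.swap a b y) < γ' (Equiv.swap a b x)
      exact hres.2

end Stmt12Aux
/-- Let `I = [σ, ρ]_L` with associated regular poset `P_I`, and suppose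
`i ≼_{P_I} i+1` is comparable but not covering. Then `γ ↦ γ s_i` is a descent-preserving
poset isomorphism from `(I, ≼_L)` onto `(I s_i, ≼_L)`. -/
theorem stmt12 (n : ℕ) (σ ρ : Equiv.Perm (Fin n)) (hle : leL σ ρ)
    (P : FinPoset n) (hreg : Regular P) (hIP : SigmaL P = intervalL σ ρ)
    (i : ℕ) (h : i + 1 < n)
    (hbelow : P.le ⟨i, Nat.lt_of_succ_lt h⟩ ⟨i + 1, h⟩)
    (hnc : ¬ Covers P ⟨i, Nat.lt_of_succ_lt h⟩ ⟨i + 1, h⟩) :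
    (∀ γ ∈ intervalL σ ρ, DesL (γ * adj n i h) = DesL γ) ∧
      Set.BijOn (fun γ => γ * adj n i h) (intervalL σ ρ)
        ((fun γ => γ * adj n i h) '' intervalL σ ρ) ∧
      (∀ γ ∈ intervalL σ ρ, ∀ γ' ∈ intervalL σ ρ,
        (leL γ γ' ↔ leL (γ * adj n i h) (γ' * adj n i h))) := by
  classical
  set ii : Fin n := ⟨i, Nat.lt_of_succ_lt h⟩ with hii
  set ii1 : Fin n := ⟨i + 1, h⟩ with hii1
  have hvii : (ii : ℕ) = i := rfl
  have hvii1 : (ii1 : ℕ) = i + 1 := rfl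
  have hne : ii ≠ ii1 := by
    intro e
    have := congrArg Fin.val e
    rw [hvii, hvii1] at this
    omega
  have hex : ∃ c, c ≠ ii ∧ c ≠ ii1 ∧ P.le ii c ∧ P.le c ii1 := by
    by_contra hno
    exact hnc ⟨hne, hbelow, hno⟩
  have hSig : ∀ γ ∈ intervalL σ ρ, γ ∈ SigmaL P := fun γ hγ => hIP.symm ▸ hγ
  have hgap : ∀ γ ∈ intervalL σ ρ, (γ ii : ℕ) + 1 < (γ ii1 : ℕ) := by
    intro γ hγ
    have hs := hSig γ hγ
    obtain ⟨c, hc1, hc2, hic, hci⟩ := hex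
    have h1 : γ ii ≤ γ c := hs ii c hic
    have h2 : γ c ≤ γ ii1 := hs c ii1 hci
    have h1' : γ ii < γ c := lt_of_le_of_ne h1 (fun e => hc1 (γ.injective e.symm))
    have h2' : γ c < γ ii1 := lt_of_le_of_ne h2 (fun e => hc2 (γ.injective e))
    rw [Fin.lt_def] at h1' h2'
    omega
  have hltii : ∀ γ ∈ intervalL σ ρ, γ ii < γ ii1 := fun γ hγ =>
    Fin.lt_def.mpr (by have := hgap γ hγ; omega)
  have part1 : ∀ γ ∈ intervalL σ ρ, DesL (γ * adj n i h) = DesL γ := by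
    intro γ hγ
    have hg := hgap γ hγ
    ext j
    by_cases hj : j + 1 < n
    · rw [Stmt12Aux.mem_DesL_iff hj, Stmt12Aux.mem_DesL_iff hj]
      have hinv : ∀ x : Fin n,
          (γ * adj n i h)⁻¹ x = Equiv.swap ii ii1 (γ⁻¹ x) := by
        intro x
        rw [mul_inv_rev, Stmt12Aux.adj_inv]
        rfl
      rw [hinv, hinv]
      refine Stmt12Aux.swap_lt_iff rfl ?_ ?_
      · rintro ⟨e1, e2⟩
        have f1 : γ ii = ⟨j + 1, hj⟩ := by rw [← e1, Equiv.Perm.coe_inv, Equiv.apply_symm_apply]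
        have f2 : γ ii1 = ⟨j, Nat.lt_of_succ_lt hj⟩ := by
          rw [← e2, Equiv.Perm.coe_inv, Equiv.apply_symm_apply]
        have f1' : (γ ii : ℕ) = j + 1 := congrArg Fin.val f1
        have f2' : (γ ii1 : ℕ) = j := congrArg Fin.val f2
        omega
      · rintro ⟨e1, e2⟩
        have f1 : γ ii1 = ⟨j + 1, hj⟩ := by rw [← e1, Equiv.Perm.coe_inv, Equiv.apply_symm_apply]
        have f2 : γ ii = ⟨j, Nat.lt_of_succ_lt hj⟩ := by
          rw [← e2, Equiv.Perm.coe_inv, Equiv.apply_symm_apply]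
        have f1' : (γ ii1 : ℕ) = j + 1 := congrArg Fin.val f1
        have f2' : (γ ii : ℕ) = j := congrArg Fin.val f2
        omega
    · simp only [DesL, Set.mem_setOf_eq]
      exact iff_of_false (fun hx => hj hx.choose) (fun hx => hj hx.choose)
  refine ⟨part1, ?_, ?_⟩
  · exact Set.InjOn.bijOn_image
      (Set.injOn_of_injective (mul_left_injective (adj n i h)))
  · intro γ hγ γ' hγ'
    rw [Stmt12Aux.leL_iff, Stmt12Aux.leL_iff]
    exact (Stmt12Aux.Inv_mul_swap_subset_iff rfl (hltii γ hγ) (hltii γ' hγ')).symm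
end

section
/- Let D be a diagram with n boxes that is free of a strictly upper-right configuration, and let T be a standard tableau on the reflected diagram Dˣ. Then for i ∈ [n-1], the entry i is strictly above and strictly to the left of i+1 in T if and only if, in the poset P_{Tˣ}, the pair (i, i+1) is comparable (with i below i+1) but not a covering pair. -/
/-- A diagram `D ⊆ ℕ²` contains a *strictly upper-right pair* if it has boxes `p, q` with
`p.1 < q.1`, `p.2 < q.2`, and no other box of `D` inside the smallest rectangle
containing `p` and `q`. -/
def HasSUR (D : Set (ℕ × ℕ)) : Prop :=
  ∃ p ∈ D, ∃ q ∈ D, p.1 < q.1 ∧ p.2 < q.2 ∧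
    ∀ r ∈ D, (p.1 ≤ r.1 ∧ r.1 ≤ q.1 ∧ p.2 ≤ r.2 ∧ r.2 ≤ q.2) → r = p ∨ r = q

/-- The poset `P_{Tˣ}` of the reflected filling: `a ≼ b` iff the box of `a` is weakly
left of the box of `b` and weakly below it *after reflecting across the x-axis*,
i.e. `x_a ≤ x_b` and `y_b ≤ y_a` in the original coordinates of `T`. -/
def reflPoset (n : ℕ) (pos : Fin n → ℕ × ℕ) (hinj : Function.Injective pos) :
    FinPoset n where
  le a b := (pos a).1 ≤ (pos b).1 ∧ (pos b).2 ≤ (pos a).2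
  refl a := ⟨le_refl _, le_refl _⟩
  trans a b c h1 h2 := ⟨h1.1.trans h2.1, h2.2.trans h1.2⟩
  antisymm a b h1 h2 := hinj (Prod.ext (le_antisymm h1.1 h2.1) (le_antisymm h2.2 h1.2))

/-! Reflection across the x-axis turns the relation "weakly left and weakly above" among the
entries of `T` into the product order on the boxes of `D`. If `i` is strictly up-left of `i+1`,
the two boxes are opposite corners of a rectangle of `D`; as `D` has no strictly upper-right
pair, the rectangle holds a third box, whose entry lies between `i` and `i+1` in `P_{Tˣ}`.
Conversely, take `i ≺ c ≺ i+1` in `P_{Tˣ}`. If `i` and `i+1` shared a column, the standard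
condition would force `i+1 ≤ i`; if they shared a row, it would force `i < c < i+1`. -/

theorem exists_mem_rect_of_not_hasSUR {D : Set (ℕ × ℕ)} (hfree : ¬ HasSUR D)
    {p q : ℕ × ℕ} (hp : p ∈ D) (hq : q ∈ D) (h₁ : p.1 < q.1) (h₂ : p.2 < q.2) :
    ∃ r ∈ D, (p.1 ≤ r.1 ∧ r.1 ≤ q.1 ∧ p.2 ≤ r.2 ∧ r.2 ≤ q.2) ∧ r ≠ p ∧ r ≠ q := by
  unfold HasSUR at hfree
  push Not at hfree
  exact hfree p hp q hq h₁ h₂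

section reflPoset

variable {n : ℕ} {pos : Fin n → ℕ × ℕ} {hinj : Function.Injective pos}

theorem reflPoset_not_covers_of_lt_of_lt {M : ℕ} (hM : ∀ k, (pos k).2 ≤ M)
    (hfree : ¬ HasSUR ((fun q => (q.1, M - q.2)) '' Set.range pos)) {a b : Fin n}
    (hx : (pos a).1 < (pos b).1) (hy : (pos b).2 < (pos a).2) :
    ¬ Covers (reflPoset n pos hinj) a b := by
  rintro ⟨-, -, hcov⟩
  have hmem (k : Fin n) :
      ((pos k).1, M - (pos k).2) ∈ (fun q => (q.1, M - q.2)) '' Set.range pos :=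
    ⟨pos k, ⟨k, rfl⟩, rfl⟩
  obtain ⟨_, ⟨_, ⟨k, rfl⟩, rfl⟩, hrect, hka, hkb⟩ :=
    exists_mem_rect_of_not_hasSUR hfree (hmem a) (hmem b) hx (by have := hM a; omega)
  dsimp only at hrect
  have := hM k; have := hM b
  exact hcov ⟨k, (by rintro rfl; exact hka rfl), (by rintro rfl; exact hkb rfl),
    ⟨hrect.1, by omega⟩, ⟨hrect.2.1, by omega⟩⟩

theorem reflPoset_fst_lt
    (hstd : ∀ a b : Fin n, (pos a).1 ≤ (pos b).1 → (pos a).2 ≤ (pos b).2 → a ≤ b) {a b : Fin n}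
    (hab : a < b) (hle : (reflPoset n pos hinj).le a b) :
    (pos a).1 < (pos b).1 :=
  hle.1.lt_of_ne fun heq => (hstd b a heq.ge hle.2).not_gt hab

theorem reflPoset_snd_lt
    (hstd : ∀ a b : Fin n, (pos a).1 ≤ (pos b).1 → (pos a).2 ≤ (pos b).2 → a ≤ b) {a b c : Fin n}
    (hab : a ⋖ b) (hac : (reflPoset n pos hinj).le a c)
    (hcb : (reflPoset n pos hinj).le c b) (hca_ne : c ≠ a) (hcb_ne : c ≠ b) :
    (pos b).2 < (pos a).2 := by
  refine (hcb.2.trans hac.2).lt_of_ne fun heq => ?_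
  have hac_lt : a < c := (hstd a c hac.1 (heq ▸ hcb.2)).lt_of_ne hca_ne.symm
  have hcb_lt : c < b := (hstd c b hcb.1 (heq ▸ hac.2)).lt_of_ne hcb_ne
  exact hab.2 hac_lt hcb_lt

end reflPoset

/-- Let `D` be a diagram with `n` boxes free of a strictly upper-right
configuration and `T` a standard tableau on the reflected diagram `Dˣ`, recorded by the
position map `pos` of its entries (0-indexed). Then for `i ∈ [n-1]`, the entry `i` is
strictly above and strictly to the left of `i+1` in `T` iff, in the poset `P_{Tˣ}`,
the pair `(i, i+1)` is comparable with `i` below `i+1` but is not a covering pair. -/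
theorem stmt14 (n : ℕ) (pos : Fin n → ℕ × ℕ) (hinj : Function.Injective pos)
    (hstd : ∀ a b : Fin n, (pos a).1 ≤ (pos b).1 → (pos a).2 ≤ (pos b).2 → a ≤ b)
    (M : ℕ) (hM : ∀ k, (pos k).2 ≤ M)
    (D : Set (ℕ × ℕ)) (hD : D = (fun q => (q.1, M - q.2)) '' Set.range pos)
    (hfree : ¬ HasSUR D)
    (i : ℕ) (h : i + 1 < n) :
    ((pos ⟨i, Nat.lt_of_succ_lt h⟩).1 < (pos ⟨i + 1, h⟩).1 ∧
        (pos ⟨i + 1, h⟩).2 < (pos ⟨i, Nat.lt_of_succ_lt h⟩).2) ↔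
      ((reflPoset n pos hinj).le ⟨i, Nat.lt_of_succ_lt h⟩ ⟨i + 1, h⟩ ∧
        ¬ Covers (reflPoset n pos hinj) ⟨i, Nat.lt_of_succ_lt h⟩ ⟨i + 1, h⟩) := by
  set a : Fin n := ⟨i, Nat.lt_of_succ_lt h⟩
  set b : Fin n := ⟨i + 1, h⟩
  have hab : a ⋖ b := ⟨Fin.lt_def.2 (Nat.lt_succ_self i), fun c hac hcb => by
    simp only [Fin.lt_def, a, b] at hac hcb; omega⟩
  subst hD
  constructor
  · rintro ⟨hx, hy⟩
    exact ⟨⟨hx.le, hy.le⟩, reflPoset_not_covers_of_lt_of_lt hM hfree hx hy⟩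
  · rintro ⟨hle, hnc⟩
    obtain ⟨c, hca_ne, hcb_ne, hac, hcb⟩ : ∃ c, c ≠ a ∧ c ≠ b ∧
        (reflPoset n pos hinj).le a c ∧ (reflPoset n pos hinj).le c b := by
      by_contra hno
      exact hnc ⟨hab.lt.ne, hle, hno⟩
    exact ⟨reflPoset_fst_lt hstd hab.lt hle, reflPoset_snd_lt hstd hab hac hcb hca_ne hcb_ne⟩
end

section
/- Define operators π_i (1 ≤ i ≤ n-1) on the free vector space spanned by standard tableaux T on a fixed diagram E by: π_i T = s_i · T if i is strictly upper-left of i+1 in T; π_i T = 0 if i is lower-left of (i.e., weakly left of and weakly below) i+1; and π_i T = T otherwise. Then these operators satisfy the 0-Hecke relations: π_i² = π_i, π_i π_j = π_j π_i for |i-j| ≥ 2, and π_i π_{i+1} π_i = π_{i+1} π_i π_{i+1}. -/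
/-- A standard tableau on a diagram `E ⊆ ℕ²` with `n` boxes, recorded by the position map
of its (0-indexed) entries: entries increase weakly up-and-right. -/
structure StdTab (n : ℕ) (E : Set (ℕ × ℕ)) where
  pos : Fin n → ℕ × ℕ
  inj : Function.Injective pos
  range_eq : Set.range pos = E
  std : ∀ a b : Fin n, (pos a).1 ≤ (pos b).1 → (pos a).2 ≤ (pos b).2 → a ≤ b

namespace StdTab

variable {n : ℕ} {E : Set (ℕ × ℕ)}

/-- Entry `i` is *strictly upper-left* of entry `i+1` in `T`. -/
def UpperLeft (T : StdTab n E) (i : ℕ) (h : i + 1 < n) : Prop :=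
  (T.pos ⟨i, Nat.lt_of_succ_lt h⟩).1 < (T.pos ⟨i + 1, h⟩).1 ∧
    (T.pos ⟨i + 1, h⟩).2 < (T.pos ⟨i, Nat.lt_of_succ_lt h⟩).2

/-- Entry `i` is *lower-left* (weakly left of and weakly below) of entry `i+1` in `T`. -/
def LowerLeft (T : StdTab n E) (i : ℕ) (h : i + 1 < n) : Prop :=
  (T.pos ⟨i, Nat.lt_of_succ_lt h⟩).1 ≤ (T.pos ⟨i + 1, h⟩).1 ∧
    (T.pos ⟨i, Nat.lt_of_succ_lt h⟩).2 ≤ (T.pos ⟨i + 1, h⟩).2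

/-- `s_i · T`: the standard tableau obtained by swapping the entries `i` and `i+1`,
when `i` is strictly upper-left of `i+1`. -/
def swapTab (T : StdTab n E) (i : ℕ) (h : i + 1 < n) (hul : T.UpperLeft i h) :
    StdTab n E where
  pos := T.pos ∘ Equiv.swap ⟨i, Nat.lt_of_succ_lt h⟩ ⟨i + 1, h⟩
  inj := T.inj.comp (Equiv.swap _ _).injective
  range_eq := by
    rw [Set.range_comp, Equiv.range_eq_univ, Set.image_univ, T.range_eq]
  std := by
    intro c d h1 h2
    set a : Fin n := ⟨i, Nat.lt_of_succ_lt h⟩ with ha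
    set b : Fin n := ⟨i + 1, h⟩ with hb
    have hab : a < b := by simp [ha, hb, Fin.lt_def]
    simp only [Function.comp_apply] at h1 h2
    by_cases hca : c = a
    · by_cases hda : d = a
      · subst hca; subst hda; exact le_refl _
      · by_cases hdb : d = b
        · subst hca; subst hdb; exact le_of_lt hab
        · subst hca
          rw [Equiv.swap_apply_left, Equiv.swap_apply_of_ne_of_ne hda hdb] at h1 h2
          exact le_trans (le_of_lt hab) (T.std b d h1 h2)
    · by_cases hcb : c = b
      · subst hcb
        by_cases hda : d = a
        · subst hda
          rw [Equiv.swap_apply_right, Equiv.swap_apply_left] at h1 h2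
          exact absurd h2 (not_le.mpr hul.2)
        · by_cases hdb : d = b
          · subst hdb; exact le_refl _
          · rw [Equiv.swap_apply_right, Equiv.swap_apply_of_ne_of_ne hda hdb] at h1 h2
            have had : a ≤ d := T.std a d h1 h2
            have : a ≠ d := fun he => hda he.symm
            have : a < d := lt_of_le_of_ne had this
            rw [Fin.lt_def] at this
            rw [Fin.le_def]
            simpa [ha, hb] using this
      · by_cases hda : d = a
        · subst hda
          rw [Equiv.swap_apply_of_ne_of_ne hca hcb, Equiv.swap_apply_left] at h1 h2
          have hcb' : c ≤ b := T.std c b h1 h2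
          have : c < b := lt_of_le_of_ne hcb' hcb
          rw [Fin.lt_def] at this
          rw [Fin.le_def]
          simp only [ha, hb] at this ⊢
          omega
        · by_cases hdb : d = b
          · subst hdb
            rw [Equiv.swap_apply_of_ne_of_ne hca hcb, Equiv.swap_apply_right] at h1 h2
            exact le_trans (T.std c a h1 h2) (le_of_lt hab)
          · rw [Equiv.swap_apply_of_ne_of_ne hca hcb,
              Equiv.swap_apply_of_ne_of_ne hda hdb] at h1 h2
            exact T.std c d h1 h2

end StdTab

open Classical in
/-- The image of the basis element `T` under the 0-Hecke operator `π_i`: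
`s_i · T` if `i` is strictly upper-left of `i+1`; `0` if `i` is lower-left of `i+1`;
and `T` otherwise. -/
noncomputable def piAct (n : ℕ) (E : Set (ℕ × ℕ)) (i : ℕ) (h : i + 1 < n)
    (T : StdTab n E) : StdTab n E →₀ ℚ :=
  if hul : T.UpperLeft i h then Finsupp.single (T.swapTab i h hul) 1
  else if T.LowerLeft i h then 0
  else Finsupp.single T 1

/-- The 0-Hecke operator `π_i` on the free vector space spanned by the standard tableaux
on `E`, extending `piAct` linearly. -/
noncomputable def piOp (n : ℕ) (E : Set (ℕ × ℕ)) (i : ℕ) (h : i + 1 < n) :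
    (StdTab n E →₀ ℚ) →ₗ[ℚ] (StdTab n E →₀ ℚ) :=
  Finsupp.lsum ℚ fun T => LinearMap.toSpanSingleton ℚ _ (piAct n E i h T)
namespace StdTab

variable {n : ℕ} {E : Set (ℕ × ℕ)}

theorem ext' {T S : StdTab n E} (h : T.pos = S.pos) : T = S := by
  cases T; cases S; subst h; rfl

theorem swapTab_pos (T : StdTab n E) (i : ℕ) (h : i + 1 < n) (hul : T.UpperLeft i h)
    (k : Fin n) :
    (T.swapTab i h hul).pos k = T.pos (Equiv.swap ⟨i, Nat.lt_of_succ_lt h⟩ ⟨i + 1, h⟩ k) := rfl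

theorem not_both_le (T : StdTab n E) {a b : Fin n} (hab : a < b)
    (h1 : (T.pos b).1 ≤ (T.pos a).1) (h2 : (T.pos b).2 ≤ (T.pos a).2) : False :=
  absurd (T.std b a h1 h2) (not_le.mpr hab)

end StdTab

open Classical in
/-- The `Option`-valued step function underlying `piAct`. -/
noncomputable def stepT (n : ℕ) (E : Set (ℕ × ℕ)) (i : ℕ) (h : i + 1 < n)
    (T : StdTab n E) : Option (StdTab n E) :=
  if hul : T.UpperLeft i h then some (T.swapTab i h hul)
  else if T.LowerLeft i h then none
  else some T

noncomputable def ofOpt {n : ℕ} {E : Set (ℕ × ℕ)} (o : Option (StdTab n E)) :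
    StdTab n E →₀ ℚ :=
  o.elim 0 (fun T => Finsupp.single T 1)

theorem piAct_eq {n : ℕ} {E : Set (ℕ × ℕ)} (i : ℕ) (h : i + 1 < n) (T : StdTab n E) :
    piAct n E i h T = ofOpt (stepT n E i h T) := by
  unfold piAct stepT; split_ifs <;> rfl

theorem piOp_ofOpt {n : ℕ} {E : Set (ℕ × ℕ)} (i : ℕ) (h : i + 1 < n)
    (o : Option (StdTab n E)) :
    piOp n E i h (ofOpt o) = ofOpt (o.bind (stepT n E i h)) := by
  cases o with
  | none => simp [ofOpt]
  | some T =>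
    show piOp n E i h (Finsupp.single T 1) = _
    rw [piOp, Finsupp.lsum_single]
    simp [LinearMap.toSpanSingleton_apply, piAct_eq, Option.bind]
open StdTab in
theorem stepT_idem {n : ℕ} {E : Set (ℕ × ℕ)} (i : ℕ) (h : i + 1 < n) (T : StdTab n E) :
    (stepT n E i h T).bind (stepT n E i h) = stepT n E i h T := by
  by_cases hul : T.UpperLeft i h
  · rw [stepT, dif_pos hul, Option.bind_some]
    obtain ⟨u1, u2⟩ := id hul
    have e1 : (T.swapTab i h hul).pos ⟨i, Nat.lt_of_succ_lt h⟩ = T.pos ⟨i + 1, h⟩ := by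
      rw [swapTab_pos, Equiv.swap_apply_left]
    have e2 : (T.swapTab i h hul).pos ⟨i + 1, h⟩ = T.pos ⟨i, Nat.lt_of_succ_lt h⟩ := by
      rw [swapTab_pos, Equiv.swap_apply_right]
    have hU : ¬ (T.swapTab i h hul).UpperLeft i h := by
      rw [UpperLeft, e1, e2]; omega
    have hL : ¬ (T.swapTab i h hul).LowerLeft i h := by
      rw [LowerLeft, e1, e2]; omega
    rw [stepT, dif_neg hU, if_neg hL]
  · by_cases hll : T.LowerLeft i h
    · rw [stepT, dif_neg hul, if_pos hll, Option.bind_none]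
    · rw [stepT, dif_neg hul, if_neg hll, Option.bind_some, stepT, dif_neg hul, if_neg hll]
theorem swap_comm_apply {α : Type*} [DecidableEq α] {a b c d : α}
    (hac : a ≠ c) (had : a ≠ d) (hbc : b ≠ c) (hbd : b ≠ d) (k : α) :
    Equiv.swap a b (Equiv.swap c d k) = Equiv.swap c d (Equiv.swap a b k) := by
  simp only [Equiv.swap_apply_def]
  split_ifs <;> simp_all

namespace StdTab
variable {n : ℕ} {E : Set (ℕ × ℕ)}

theorem UpperLeft_congr {T S : StdTab n E} (i : ℕ) (h : i + 1 < n)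
    (h1 : S.pos ⟨i, Nat.lt_of_succ_lt h⟩ = T.pos ⟨i, Nat.lt_of_succ_lt h⟩)
    (h2 : S.pos ⟨i + 1, h⟩ = T.pos ⟨i + 1, h⟩) :
    S.UpperLeft i h ↔ T.UpperLeft i h := by rw [UpperLeft, UpperLeft, h1, h2]

theorem LowerLeft_congr {T S : StdTab n E} (i : ℕ) (h : i + 1 < n)
    (h1 : S.pos ⟨i, Nat.lt_of_succ_lt h⟩ = T.pos ⟨i, Nat.lt_of_succ_lt h⟩)
    (h2 : S.pos ⟨i + 1, h⟩ = T.pos ⟨i + 1, h⟩) :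
    S.LowerLeft i h ↔ T.LowerLeft i h := by rw [LowerLeft, LowerLeft, h1, h2]

end StdTab

open StdTab in
theorem stepT_comm {n : ℕ} {E : Set (ℕ × ℕ)} (i j : ℕ) (hi : i + 1 < n) (hj : j + 1 < n)
    (hij : i + 2 ≤ j ∨ j + 2 ≤ i) (T : StdTab n E) :
    (stepT n E j hj T).bind (stepT n E i hi) =
      (stepT n E i hi T).bind (stepT n E j hj) := by
  have hac : (⟨i, Nat.lt_of_succ_lt hi⟩ : Fin n) ≠ ⟨j, Nat.lt_of_succ_lt hj⟩ := by
    simp [Fin.ext_iff]; omega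
  have had : (⟨i, Nat.lt_of_succ_lt hi⟩ : Fin n) ≠ ⟨j + 1, hj⟩ := by
    simp [Fin.ext_iff]; omega
  have hbc : (⟨i + 1, hi⟩ : Fin n) ≠ ⟨j, Nat.lt_of_succ_lt hj⟩ := by
    simp [Fin.ext_iff]; omega
  have hbd : (⟨i + 1, hi⟩ : Fin n) ≠ ⟨j + 1, hj⟩ := by
    simp [Fin.ext_iff]; omega
  -- positions at i, i+1 are unchanged by a swap at j, and vice versa
  have pi1 : ∀ hul, (T.swapTab j hj hul).pos ⟨i, Nat.lt_of_succ_lt hi⟩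
      = T.pos ⟨i, Nat.lt_of_succ_lt hi⟩ := fun hul => by
    rw [swapTab_pos, Equiv.swap_apply_of_ne_of_ne hac had]
  have pi2 : ∀ hul, (T.swapTab j hj hul).pos ⟨i + 1, hi⟩ = T.pos ⟨i + 1, hi⟩ := fun hul => by
    rw [swapTab_pos, Equiv.swap_apply_of_ne_of_ne hbc hbd]
  have pj1 : ∀ hul, (T.swapTab i hi hul).pos ⟨j, Nat.lt_of_succ_lt hj⟩
      = T.pos ⟨j, Nat.lt_of_succ_lt hj⟩ := fun hul => by
    rw [swapTab_pos, Equiv.swap_apply_of_ne_of_ne hac.symm hbc.symm]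
  have pj2 : ∀ hul, (T.swapTab i hi hul).pos ⟨j + 1, hj⟩ = T.pos ⟨j + 1, hj⟩ := fun hul => by
    rw [swapTab_pos, Equiv.swap_apply_of_ne_of_ne had.symm hbd.symm]
  by_cases hUi : T.UpperLeft i hi
  · by_cases hUj : T.UpperLeft j hj
    · have hUi' : (T.swapTab j hj hUj).UpperLeft i hi :=
        (UpperLeft_congr i hi (pi1 hUj) (pi2 hUj)).mpr hUi
      have hUj' : (T.swapTab i hi hUi).UpperLeft j hj :=
        (UpperLeft_congr j hj (pj1 hUi) (pj2 hUi)).mpr hUj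
      rw [stepT, dif_pos hUj, Option.bind_some, stepT, dif_pos hUi', stepT, dif_pos hUi,
        Option.bind_some, stepT, dif_pos hUj']
      congr 1
      apply ext'
      funext k
      exact congrArg T.pos (swap_comm_apply hac had hbc hbd k).symm
    · by_cases hLj : T.LowerLeft j hj
      · have hLj' : (T.swapTab i hi hUi).LowerLeft j hj :=
          (LowerLeft_congr j hj (pj1 hUi) (pj2 hUi)).mpr hLj
        have hUj' : ¬ (T.swapTab i hi hUi).UpperLeft j hj :=
          fun hh => hUj ((UpperLeft_congr j hj (pj1 hUi) (pj2 hUi)).mp hh)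
        rw [stepT, dif_neg hUj, if_pos hLj, Option.bind_none, stepT, dif_pos hUi,
          Option.bind_some, stepT, dif_neg hUj', if_pos hLj']
      · have hLj' : ¬ (T.swapTab i hi hUi).LowerLeft j hj :=
          fun hh => hLj ((LowerLeft_congr j hj (pj1 hUi) (pj2 hUi)).mp hh)
        have hUj' : ¬ (T.swapTab i hi hUi).UpperLeft j hj :=
          fun hh => hUj ((UpperLeft_congr j hj (pj1 hUi) (pj2 hUi)).mp hh)
        rw [stepT, dif_neg hUj, if_neg hLj, Option.bind_some, stepT, dif_pos hUi,
          Option.bind_some, stepT, dif_neg hUj', if_neg hLj']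
  · by_cases hLi : T.LowerLeft i hi
    · by_cases hUj : T.UpperLeft j hj
      · have hLi' : (T.swapTab j hj hUj).LowerLeft i hi :=
          (LowerLeft_congr i hi (pi1 hUj) (pi2 hUj)).mpr hLi
        have hUi' : ¬ (T.swapTab j hj hUj).UpperLeft i hi :=
          fun hh => hUi ((UpperLeft_congr i hi (pi1 hUj) (pi2 hUj)).mp hh)
        rw [stepT, dif_pos hUj, Option.bind_some, stepT, dif_neg hUi', if_pos hLi',
          stepT, dif_neg hUi, if_pos hLi, Option.bind_none]
      · by_cases hLj : T.LowerLeft j hj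
        · rw [stepT, dif_neg hUj, if_pos hLj, Option.bind_none, stepT, dif_neg hUi,
            if_pos hLi, Option.bind_none]
        · rw [stepT, dif_neg hUj, if_neg hLj, Option.bind_some, stepT, dif_neg hUi,
            if_pos hLi, Option.bind_none]
    · by_cases hUj : T.UpperLeft j hj
      · have hLi' : ¬ (T.swapTab j hj hUj).LowerLeft i hi :=
          fun hh => hLi ((LowerLeft_congr i hi (pi1 hUj) (pi2 hUj)).mp hh)
        have hUi' : ¬ (T.swapTab j hj hUj).UpperLeft i hi :=
          fun hh => hUi ((UpperLeft_congr i hi (pi1 hUj) (pi2 hUj)).mp hh)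
        rw [stepT, dif_pos hUj, Option.bind_some, stepT, dif_neg hUi', if_neg hLi',
          stepT, dif_neg hUi, if_neg hLi, Option.bind_some, stepT, dif_pos hUj]
      · by_cases hLj : T.LowerLeft j hj
        · rw [stepT, dif_neg hUj, if_pos hLj, Option.bind_none, stepT, dif_neg hUi,
            if_neg hLi, Option.bind_some, stepT, dif_neg hUj, if_pos hLj]
        · rw [stepT, dif_neg hUj, if_neg hLj, Option.bind_some, stepT, dif_neg hUi,
            if_neg hLi, Option.bind_some, stepT, dif_neg hUj, if_neg hLj]
theorem swap_braid {α : Type*} [DecidableEq α] {a b c : α}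
    (hab : a ≠ b) (hbc : b ≠ c) (hac : a ≠ c) (k : α) :
    Equiv.swap a b (Equiv.swap b c (Equiv.swap a b k)) =
      Equiv.swap b c (Equiv.swap a b (Equiv.swap b c k)) := by
  have e1 : Equiv.swap a b a = b := Equiv.swap_apply_left _ _
  have e2 : Equiv.swap a b b = a := Equiv.swap_apply_right _ _
  have e3 : Equiv.swap a b c = c := Equiv.swap_apply_of_ne_of_ne hac.symm hbc.symm
  have e4 : Equiv.swap b c a = a := Equiv.swap_apply_of_ne_of_ne hab hac
  have e5 : Equiv.swap b c b = c := Equiv.swap_apply_left _ _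
  have e6 : Equiv.swap b c c = b := Equiv.swap_apply_right _ _
  rcases eq_or_ne k a with rfl | ka
  · simp only [e1, e2, e3, e4, e5, e6]
  rcases eq_or_ne k b with rfl | kb
  · simp only [e1, e2, e3, e4, e5, e6]
  rcases eq_or_ne k c with rfl | kc
  · simp only [e1, e2, e3, e4, e5, e6]
  · have f1 : Equiv.swap a b k = k := Equiv.swap_apply_of_ne_of_ne ka kb
    have f2 : Equiv.swap b c k = k := Equiv.swap_apply_of_ne_of_ne kb kc
    simp only [f1, f2]

theorem StdTab.UpperLeft_iff' {n : ℕ} {E : Set (ℕ × ℕ)} (T : StdTab n E) (i : ℕ)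
    (h : i + 1 < n) : T.UpperLeft i h ↔
      ((T.pos ⟨i, Nat.lt_of_succ_lt h⟩).1 < (T.pos ⟨i + 1, h⟩).1 ∧
        (T.pos ⟨i + 1, h⟩).2 < (T.pos ⟨i, Nat.lt_of_succ_lt h⟩).2) := ⟨id, id⟩

theorem StdTab.LowerLeft_iff' {n : ℕ} {E : Set (ℕ × ℕ)} (T : StdTab n E) (i : ℕ)
    (h : i + 1 < n) : T.LowerLeft i h ↔
      ((T.pos ⟨i, Nat.lt_of_succ_lt h⟩).1 ≤ (T.pos ⟨i + 1, h⟩).1 ∧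
        (T.pos ⟨i, Nat.lt_of_succ_lt h⟩).2 ≤ (T.pos ⟨i + 1, h⟩).2) := ⟨id, id⟩

set_option maxHeartbeats 2000000 in
open StdTab in
theorem stepT_braid {n : ℕ} {E : Set (ℕ × ℕ)} (i : ℕ) (hi : i + 1 < n)
    (hi1 : i + 1 + 1 < n) (T : StdTab n E) :
    ((stepT n E i hi T).bind (stepT n E (i + 1) hi1)).bind (stepT n E i hi) =
      ((stepT n E (i + 1) hi1 T).bind (stepT n E i hi)).bind (stepT n E (i + 1) hi1) := by
  have nb' : (⟨i + 1, Nat.lt_of_succ_lt hi1⟩ : Fin n) = ⟨i + 1, hi⟩ := rfl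
  have hAB : (⟨i, Nat.lt_of_succ_lt hi⟩ : Fin n) ≠ ⟨i + 1, hi⟩ := by
    simp [Fin.ext_iff]
  have hAC : (⟨i, Nat.lt_of_succ_lt hi⟩ : Fin n) ≠ ⟨i + 1 + 1, hi1⟩ := by
    simp [Fin.ext_iff]; omega
  have hBC : (⟨i + 1, hi⟩ : Fin n) ≠ ⟨i + 1 + 1, hi1⟩ := by
    simp [Fin.ext_iff]
  have s1A : Equiv.swap (⟨i, Nat.lt_of_succ_lt hi⟩ : Fin n) ⟨i + 1, hi⟩
      ⟨i, Nat.lt_of_succ_lt hi⟩ = ⟨i + 1, hi⟩ := Equiv.swap_apply_left _ _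
  have s1B : Equiv.swap (⟨i, Nat.lt_of_succ_lt hi⟩ : Fin n) ⟨i + 1, hi⟩
      ⟨i + 1, hi⟩ = ⟨i, Nat.lt_of_succ_lt hi⟩ := Equiv.swap_apply_right _ _
  have s1C : Equiv.swap (⟨i, Nat.lt_of_succ_lt hi⟩ : Fin n) ⟨i + 1, hi⟩
      ⟨i + 1 + 1, hi1⟩ = ⟨i + 1 + 1, hi1⟩ :=
    Equiv.swap_apply_of_ne_of_ne hAC.symm hBC.symm
  have s2A : Equiv.swap (⟨i + 1, hi⟩ : Fin n) ⟨i + 1 + 1, hi1⟩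
      ⟨i, Nat.lt_of_succ_lt hi⟩ = ⟨i, Nat.lt_of_succ_lt hi⟩ :=
    Equiv.swap_apply_of_ne_of_ne hAB hAC
  have s2B : Equiv.swap (⟨i + 1, hi⟩ : Fin n) ⟨i + 1 + 1, hi1⟩
      ⟨i + 1, hi⟩ = ⟨i + 1 + 1, hi1⟩ := Equiv.swap_apply_left _ _
  have s2C : Equiv.swap (⟨i + 1, hi⟩ : Fin n) ⟨i + 1 + 1, hi1⟩
      ⟨i + 1 + 1, hi1⟩ = ⟨i + 1, hi⟩ := Equiv.swap_apply_right _ _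
  have hABlt : (⟨i, Nat.lt_of_succ_lt hi⟩ : Fin n) < ⟨i + 1, hi⟩ := by
    simp [Fin.lt_def]
  have hBClt : (⟨i + 1, hi⟩ : Fin n) < ⟨i + 1 + 1, hi1⟩ := by
    simp [Fin.lt_def]
  have hAClt : (⟨i, Nat.lt_of_succ_lt hi⟩ : Fin n) < ⟨i + 1 + 1, hi1⟩ := by
    simp [Fin.lt_def]
  have npq : ¬((T.pos ⟨i + 1, hi⟩).1 ≤ (T.pos ⟨i, Nat.lt_of_succ_lt hi⟩).1 ∧
      (T.pos ⟨i + 1, hi⟩).2 ≤ (T.pos ⟨i, Nat.lt_of_succ_lt hi⟩).2) :=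
    fun hh => T.not_both_le hABlt hh.1 hh.2
  have nqr : ¬((T.pos ⟨i + 1 + 1, hi1⟩).1 ≤ (T.pos ⟨i + 1, hi⟩).1 ∧
      (T.pos ⟨i + 1 + 1, hi1⟩).2 ≤ (T.pos ⟨i + 1, hi⟩).2) :=
    fun hh => T.not_both_le hBClt hh.1 hh.2
  have npr : ¬((T.pos ⟨i + 1 + 1, hi1⟩).1 ≤ (T.pos ⟨i, Nat.lt_of_succ_lt hi⟩).1 ∧
      (T.pos ⟨i + 1 + 1, hi1⟩).2 ≤ (T.pos ⟨i, Nat.lt_of_succ_lt hi⟩).2) :=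
    fun hh => T.not_both_le hAClt hh.1 hh.2
  repeat' first
  | (simp only [stepT, Option.bind_some, Option.bind_none, StdTab.UpperLeft_iff',
      StdTab.LowerLeft_iff', StdTab.swapTab_pos, nb', s1A, s1B, s1C, s2A, s2B, s2C])
  | split_ifs
  all_goals
    first
    | rfl
    | (exfalso; omega)
    | (refine congrArg some (StdTab.ext' ?_); funext k
       simp only [StdTab.swapTab_pos, nb']
       exact congrArg T.pos (swap_braid hAB hBC hAC k))
theorem piOp_single {n : ℕ} {E : Set (ℕ × ℕ)} (i : ℕ) (h : i + 1 < n) (T : StdTab n E) :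
    piOp n E i h (Finsupp.single T 1) = ofOpt (stepT n E i h T) := by
  have h0 : Finsupp.single T (1 : ℚ) = ofOpt (some T) := rfl
  rw [h0, piOp_ofOpt, Option.bind_some]
/-- The operators `π_i` on the free vector space spanned by the standard
tableaux on a diagram `E` satisfy the 0-Hecke relations: `π_i² = π_i`, commutation for
`|i - j| ≥ 2`, and the braid relations `π_i π_{i+1} π_i = π_{i+1} π_i π_{i+1}`. -/
theorem stmt15 (n : ℕ) (E : Set (ℕ × ℕ)) :
    (∀ (i : ℕ) (h : i + 1 < n),
      piOp n E i h ∘ₗ piOp n E i h = piOp n E i h) ∧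
    (∀ (i j : ℕ) (hi : i + 1 < n) (hj : j + 1 < n), i + 2 ≤ j ∨ j + 2 ≤ i →
      piOp n E i hi ∘ₗ piOp n E j hj = piOp n E j hj ∘ₗ piOp n E i hi) ∧
    (∀ (i : ℕ) (hi : i + 1 < n) (hi1 : i + 1 + 1 < n),
      piOp n E i hi ∘ₗ piOp n E (i + 1) hi1 ∘ₗ piOp n E i hi =
        piOp n E (i + 1) hi1 ∘ₗ piOp n E i hi ∘ₗ piOp n E (i + 1) hi1) := by
  refine ⟨?_, ?_, ?_⟩
  · intro i h
    refine Finsupp.lhom_ext' fun T => LinearMap.ext_ring ?_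
    simp only [LinearMap.comp_apply, Finsupp.lsingle_apply]
    rw [piOp_single, piOp_ofOpt, stepT_idem]
  · intro i j hi hj hij
    refine Finsupp.lhom_ext' fun T => LinearMap.ext_ring ?_
    simp only [LinearMap.comp_apply, Finsupp.lsingle_apply]
    rw [piOp_single, piOp_ofOpt, piOp_single, piOp_ofOpt, stepT_comm i j hi hj hij]
  · intro i hi hi1
    refine Finsupp.lhom_ext' fun T => LinearMap.ext_ring ?_
    simp only [LinearMap.comp_apply, Finsupp.lsingle_apply]
    rw [piOp_single, piOp_ofOpt, piOp_ofOpt, piOp_single, piOp_ofOpt, piOp_ofOpt,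
      stepT_braid i hi hi1 T]
end

section
/- Let E be a diagram with n boxes. Every standard tableau T on E can be obtained from the column-superstandard tableau T'_E by a sequence of swaps: T = s_{i_r} ⋯ s_{i_1} · T'_E, where at each step k, the entry i_k is strictly above and strictly to the left of i_k + 1 in s_{i_{k-1}} ⋯ s_{i_1} · T'_E. -/
/-- One swap step: `U` is obtained from `T` by swapping entries `i, i+1` where `i` is
strictly upper-left of `i+1` in `T`. -/
def stepRel {n : ℕ} {E : Set (ℕ × ℕ)} (T U : StdTab n E) : Prop :=
  ∃ (i : ℕ) (h : i + 1 < n) (hul : T.UpperLeft i h), U = T.swapTab i h hul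


namespace StdTab

variable {n : ℕ} {E : Set (ℕ × ℕ)}

theorem ext_pos {T U : StdTab n E} (h : T.pos = U.pos) : T = U := by
  cases T; cases U; simpa using h

/-- The tableau obtained by swapping back entries `i, i+1` when `i+1` is strictly
upper-left of `i` in `T`. -/
def backSwapTab (T : StdTab n E) (i : ℕ) (h : i + 1 < n)
    (hcol : (T.pos ⟨i + 1, h⟩).1 < (T.pos ⟨i, Nat.lt_of_succ_lt h⟩).1) : StdTab n E where
  pos := T.pos ∘ Equiv.swap ⟨i, Nat.lt_of_succ_lt h⟩ ⟨i + 1, h⟩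
  inj := T.inj.comp (Equiv.swap _ _).injective
  range_eq := by
    rw [Set.range_comp, Equiv.range_eq_univ, Set.image_univ, T.range_eq]
  std := by
    intro c d h1 h2
    set a : Fin n := ⟨i, Nat.lt_of_succ_lt h⟩ with ha
    set b : Fin n := ⟨i + 1, h⟩ with hb
    have hab : a < b := by simp [ha, hb, Fin.lt_def]
    simp only [Function.comp_apply] at h1 h2
    by_cases hca : c = a
    · by_cases hda : d = a
      · subst hca; subst hda; exact le_refl _
      · by_cases hdb : d = b
        · subst hca; subst hdb; exact le_of_lt hab
        · subst hca
          rw [Equiv.swap_apply_left, Equiv.swap_apply_of_ne_of_ne hda hdb] at h1 h2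
          exact le_trans (le_of_lt hab) (T.std b d h1 h2)
    · by_cases hcb : c = b
      · subst hcb
        by_cases hda : d = a
        · subst hda
          rw [Equiv.swap_apply_right, Equiv.swap_apply_left] at h1 h2
          exact absurd h1 (not_le_of_gt hcol)
        · by_cases hdb : d = b
          · subst hdb; exact le_refl _
          · rw [Equiv.swap_apply_right, Equiv.swap_apply_of_ne_of_ne hda hdb] at h1 h2
            have had : a ≤ d := T.std a d h1 h2
            have : a ≠ d := fun he => hda he.symm
            have : a < d := lt_of_le_of_ne had this
            rw [Fin.lt_def] at this
            rw [Fin.le_def]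
            simpa [ha, hb] using this
      · by_cases hda : d = a
        · subst hda
          rw [Equiv.swap_apply_of_ne_of_ne hca hcb, Equiv.swap_apply_left] at h1 h2
          have hcb' : c ≤ b := T.std c b h1 h2
          have : c < b := lt_of_le_of_ne hcb' hcb
          rw [Fin.lt_def] at this
          rw [Fin.le_def]
          simp only [ha, hb] at this ⊢
          omega
        · by_cases hdb : d = b
          · subst hdb
            rw [Equiv.swap_apply_of_ne_of_ne hca hcb, Equiv.swap_apply_right] at h1 h2
            exact le_trans (T.std c a h1 h2) (le_of_lt hab)
          · rw [Equiv.swap_apply_of_ne_of_ne hca hcb,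
              Equiv.swap_apply_of_ne_of_ne hda hdb] at h1 h2
            exact T.std c d h1 h2

theorem row_lt_of_col_lt (T : StdTab n E) (i : ℕ) (h : i + 1 < n)
    (hcol : (T.pos ⟨i + 1, h⟩).1 < (T.pos ⟨i, Nat.lt_of_succ_lt h⟩).1) :
    (T.pos ⟨i, Nat.lt_of_succ_lt h⟩).2 < (T.pos ⟨i + 1, h⟩).2 := by
  by_contra hr
  push_neg at hr
  have := T.std ⟨i + 1, h⟩ ⟨i, Nat.lt_of_succ_lt h⟩ (le_of_lt hcol) hr
  simp [Fin.le_def] at this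

theorem step_backSwap (T : StdTab n E) (i : ℕ) (h : i + 1 < n)
    (hcol : (T.pos ⟨i + 1, h⟩).1 < (T.pos ⟨i, Nat.lt_of_succ_lt h⟩).1) :
    stepRel (T.backSwapTab i h hcol) T := by
  have hrow := T.row_lt_of_col_lt i h hcol
  have hul : (T.backSwapTab i h hcol).UpperLeft i h := by
    constructor <;>
      simpa [backSwapTab, UpperLeft, Equiv.swap_apply_left, Equiv.swap_apply_right] using
        (by first | exact hcol | exact hrow)
  refine ⟨i, h, hul, ?_⟩
  apply ext_pos
  funext c
  simp [swapTab, backSwapTab, Equiv.swap_apply_self]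

theorem sum_split {N : ℕ} (g : Fin N → ℕ) (a b : Fin N) (hab : a ≠ b) :
    ∑ c, g c = g a + g b + ∑ c ∈ (Finset.univ.erase a).erase b, g c := by
  rw [← Finset.add_sum_erase _ g (Finset.mem_univ a),
      ← Finset.add_sum_erase _ g (Finset.mem_erase.mpr ⟨hab.symm, Finset.mem_univ b⟩)]
  ring

/-- The weighted column sum, used as (the complement of) a termination measure. -/
def wsum (T : StdTab n E) : ℕ := ∑ c : Fin n, (c : ℕ) * (T.pos c).1

theorem wsum_lt_backSwap (T : StdTab n E) (i : ℕ) (h : i + 1 < n)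
    (hcol : (T.pos ⟨i + 1, h⟩).1 < (T.pos ⟨i, Nat.lt_of_succ_lt h⟩).1) :
    T.wsum < (T.backSwapTab i h hcol).wsum := by
  classical
  set a : Fin n := ⟨i, Nat.lt_of_succ_lt h⟩ with ha
  set b : Fin n := ⟨i + 1, h⟩ with hb
  have hab : a ≠ b := by simp [ha, hb, Fin.ext_iff]
  have hU : (T.backSwapTab i h hcol).wsum =
      ∑ c : Fin n, (c : ℕ) * (T.pos (Equiv.swap a b c)).1 := rfl
  rw [hU]
  unfold wsum
  rw [sum_split (fun c => (c : ℕ) * (T.pos c).1) a b hab,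
      sum_split (fun c => (c : ℕ) * (T.pos (Equiv.swap a b c)).1) a b hab]
  have hsame : ∑ c ∈ (Finset.univ.erase a).erase b, (c : ℕ) * (T.pos (Equiv.swap a b c)).1 =
      ∑ c ∈ (Finset.univ.erase a).erase b, (c : ℕ) * (T.pos c).1 := by
    refine Finset.sum_congr rfl fun c hc => ?_
    rw [Finset.mem_erase, Finset.mem_erase] at hc
    rw [Equiv.swap_apply_of_ne_of_ne hc.2.1 hc.1]
  rw [hsame]
  simp only [Equiv.swap_apply_left, Equiv.swap_apply_right]
  have hb' : (b : ℕ) = (a : ℕ) + 1 := rfl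
  rw [hb']
  nlinarith [hcol]

theorem colsum_backSwap (T : StdTab n E) (i : ℕ) (h : i + 1 < n)
    (hcol : (T.pos ⟨i + 1, h⟩).1 < (T.pos ⟨i, Nat.lt_of_succ_lt h⟩).1) :
    ∑ c : Fin n, ((T.backSwapTab i h hcol).pos c).1 = ∑ c : Fin n, (T.pos c).1 :=
  Equiv.sum_comp (Equiv.swap _ _) (fun c => (T.pos c).1)

theorem wsum_le (T : StdTab n E) : T.wsum ≤ n * ∑ c : Fin n, (T.pos c).1 := by
  unfold wsum
  rw [Finset.mul_sum]
  exact Finset.sum_le_sum fun c _ =>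
    Nat.mul_le_mul_right _ (le_of_lt c.isLt)

theorem exists_descent (T T0 : StdTab n E)
    (hT0 : ∀ a b : Fin n, a ≤ b ↔
      ((T0.pos a).1 < (T0.pos b).1 ∨
        ((T0.pos a).1 = (T0.pos b).1 ∧ (T0.pos a).2 ≤ (T0.pos b).2)))
    (hne : T ≠ T0) :
    ∃ (i : ℕ) (h : i + 1 < n), (T.pos ⟨i + 1, h⟩).1 < (T.pos ⟨i, Nat.lt_of_succ_lt h⟩).1 := by
  by_contra hcon
  push_neg at hcon
  apply hne
  apply ext_pos
  -- both `toLex ∘ pos` maps are strictly monotone with the same range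
  have hF0 : StrictMono (fun c => toLex (T0.pos c)) := by
    intro c d hcd
    rw [Prod.Lex.lt_iff]
    rcases (hT0 c d).mp (le_of_lt hcd) with h1 | ⟨h1, h2⟩
    · exact Or.inl h1
    · refine Or.inr ⟨h1, lt_of_le_of_ne h2 fun hr => ?_⟩
      exact absurd (T0.inj (Prod.ext h1 hr)) (ne_of_lt hcd)
  have hF : StrictMono (fun c => toLex (T.pos c)) := by
    match n, T, T0, hcon, hF0 with
    | 0, T, T0, hcon, hF0 => intro c; exact absurd c.isLt (by omega)
    | (m + 1), T, T0, hcon, hF0 =>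
      rw [Fin.strictMono_iff_lt_succ]
      intro j
      have hj : (j : ℕ) + 1 < m + 1 := by omega
      have hc : j.castSucc = (⟨(j : ℕ), Nat.lt_of_succ_lt hj⟩ : Fin (m + 1)) := rfl
      have hs : j.succ = (⟨(j : ℕ) + 1, hj⟩ : Fin (m + 1)) := rfl
      rw [hc, hs, Prod.Lex.lt_iff]
      have hcols := hcon (j : ℕ) hj
      rcases lt_or_eq_of_le hcols with hlt | heq
      · exact Or.inl hlt
      · refine Or.inr ⟨heq, ?_⟩
        by_contra hr
        push_neg at hr
        have := T.std ⟨(j : ℕ) + 1, hj⟩ ⟨(j : ℕ), Nat.lt_of_succ_lt hj⟩ (le_of_eq heq.symm) hr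
        rw [Fin.le_def] at this
        simp at this
  have hrange : Set.range (fun c => toLex (T.pos c)) = Set.range (fun c => toLex (T0.pos c)) := by
    have h1 : Set.range (toLex ∘ T.pos) = toLex '' E := by
      rw [Set.range_comp, T.range_eq]
    have h2 : Set.range (toLex ∘ T0.pos) = toLex '' E := by
      rw [Set.range_comp, T0.range_eq]
    exact h1.trans h2.symm
  have inst : WellFoundedLT (Fin n) := inferInstance
  have := (@StrictMono.range_inj (Fin n) (ℕ ×ₗ ℕ) _ _ inst _ _ hF hF0).mp hrange
  funext c
  have := congrFun this c
  exact toLex.injective this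

end StdTab

/-- Every standard tableau on `E` is obtained from the
column-superstandard tableau `T'_E` (whose entries compare lexicographically by
(column, row), i.e. it is filled column by column, bottom to top, leftmost first) by a
sequence of swaps, each exchanging some `i` which is strictly upper-left of `i+1`. -/
theorem stmt16 (n : ℕ) (E : Set (ℕ × ℕ)) (T0 : StdTab n E)
    (hT0 : ∀ a b : Fin n, a ≤ b ↔
      ((T0.pos a).1 < (T0.pos b).1 ∨
        ((T0.pos a).1 = (T0.pos b).1 ∧ (T0.pos a).2 ≤ (T0.pos b).2))) :
    ∀ T : StdTab n E, Relation.ReflTransGen stepRel T0 T := by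
  suffices H : ∀ m, ∀ T : StdTab n E,
      n * (∑ c : Fin n, (T.pos c).1) - T.wsum ≤ m → Relation.ReflTransGen stepRel T0 T from
    fun T => H _ T le_rfl
  intro m
  induction m using Nat.strong_induction_on with
  | _ m ih =>
    intro T hT
    by_cases hTT : T = T0
    · subst hTT; exact Relation.ReflTransGen.refl
    · obtain ⟨i, h, hcol⟩ := StdTab.exists_descent T T0 hT0 hTT
      set U := T.backSwapTab i h hcol with hU
      have hstep : stepRel U T := T.step_backSwap i h hcol
      have hw : T.wsum < U.wsum := T.wsum_lt_backSwap i h hcol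
      have hcs : ∑ c : Fin n, (U.pos c).1 = ∑ c : Fin n, (T.pos c).1 :=
        T.colsum_backSwap i h hcol
      have hle : U.wsum ≤ n * ∑ c : Fin n, (U.pos c).1 := U.wsum_le
      have hlt : n * (∑ c : Fin n, (U.pos c).1) - U.wsum <
          n * (∑ c : Fin n, (T.pos c).1) - T.wsum := by
        rw [hcs] at hle ⊢
        omega
      have hm : n * (∑ c : Fin n, (U.pos c).1) - U.wsum < m := lt_of_lt_of_le hlt hT
      exact (ih _ hm U le_rfl).tail hstep
end

section
/- Let α be a composition of n. The set of column reading words of standard ribbon tableaux of shape α equals the left weak Bruhat interval [w₀(set(α)ᶜ), w₁(set(α)ᶜ)]_L, where set(αᶜ) = [n-1] \ set(α). -/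
/-- The position of the `k`-th box (0-indexed) of the ribbon diagram `rd(α)` in the
column reading order (top to bottom in each column, columns left to right):
box `k` lies in column `c = index(k)` at height `n - 1 + c - k`, so that consecutive
columns overlap in exactly one row and there is no `2 × 2` block. -/
def slotPos {n : ℕ} (α : Composition n) (k : Fin n) : ℕ × ℕ :=
  ((α.index k : ℕ), n - 1 + (α.index k : ℕ) - (k : ℕ))

/-- `pos` records a standard ribbon tableau of shape `α` (position of each 0-indexed
entry): a bijective filling of `rd(α)` increasing left-to-right along rows and
bottom-to-top along columns. -/
def IsSRT {n : ℕ} (α : Composition n) (pos : Fin n → ℕ × ℕ) : Prop :=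
  Function.Injective pos ∧ Set.range pos = Set.range (slotPos α) ∧
    (∀ a b : Fin n, (pos a).2 = (pos b).2 → (pos a).1 < (pos b).1 → a < b) ∧
    (∀ a b : Fin n, (pos a).1 = (pos b).1 → (pos a).2 < (pos b).2 → a < b)

/-- `set(α)`, 0-indexed: `m` such that `m + 1` is a proper partial sum of `α`. -/
def setOf0 {n : ℕ} (α : Composition n) : Set ℕ :=
  {m | ∃ j : ℕ, j + 1 < α.length ∧ m + 1 = α.sizeUpTo (j + 1)}

namespace St17


open Finset Equiv

variable {n : ℕ}

/-- The set of (position) inversions of a permutation. -/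
def invF (σ : Equiv.Perm (Fin n)) : Finset (Fin n × Fin n) :=
  Finset.univ.filter fun p => p.1 < p.2 ∧ σ p.2 < σ p.1

lemma mem_invF {σ : Equiv.Perm (Fin n)} {p : Fin n × Fin n} :
    p ∈ invF σ ↔ p.1 < p.2 ∧ σ p.2 < σ p.1 := by
  simp [invF]

lemma adj_apply_left (i : ℕ) (h : i + 1 < n) :
    adj n i h ⟨i, Nat.lt_of_succ_lt h⟩ = ⟨i + 1, h⟩ := Equiv.swap_apply_left _ _

lemma adj_apply_right (i : ℕ) (h : i + 1 < n) :
    adj n i h ⟨i + 1, h⟩ = ⟨i, Nat.lt_of_succ_lt h⟩ := Equiv.swap_apply_right _ _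

lemma adj_val (i : ℕ) (h : i + 1 < n) (x : Fin n) :
    (adj n i h x : ℕ) = if (x : ℕ) = i then i + 1 else if (x : ℕ) = i + 1 then i else x := by
  unfold adj
  rcases eq_or_ne (x : ℕ) i with e | e
  · rw [if_pos e, show x = ⟨i, Nat.lt_of_succ_lt h⟩ from Fin.ext e, Equiv.swap_apply_left]
  · rw [if_neg e]
    rcases eq_or_ne (x : ℕ) (i + 1) with e2 | e2
    · rw [if_pos e2, show x = ⟨i + 1, h⟩ from Fin.ext e2, Equiv.swap_apply_right]
    · rw [if_neg e2, Equiv.swap_apply_of_ne_of_ne]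
      · simp [Fin.ext_iff]; omega
      · simp [Fin.ext_iff]; omega

lemma adj_lt_iff (i : ℕ) (h : i + 1 < n) (u v : Fin n)
    (h1 : ¬((u : ℕ) = i ∧ (v : ℕ) = i + 1)) (h2 : ¬((u : ℕ) = i + 1 ∧ (v : ℕ) = i)) :
    adj n i h u < adj n i h v ↔ u < v := by
  simp only [Fin.lt_def, adj_val]
  split_ifs <;> omega

lemma adj_mul_self (i : ℕ) (h : i + 1 < n) : adj n i h * adj n i h = 1 :=
  Equiv.swap_mul_self _ _

lemma invF_adj_mul (i : ℕ) (h : i + 1 < n) (σ : Equiv.Perm (Fin n))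
    (hpq : σ⁻¹ ⟨i, Nat.lt_of_succ_lt h⟩ < σ⁻¹ ⟨i + 1, h⟩) :
    invF (adj n i h * σ)
      = insert (σ⁻¹ ⟨i, Nat.lt_of_succ_lt h⟩, σ⁻¹ ⟨i + 1, h⟩) (invF σ)
    ∧ (σ⁻¹ ⟨i, Nat.lt_of_succ_lt h⟩, σ⁻¹ ⟨i + 1, h⟩) ∉ invF σ := by
  set a := σ⁻¹ ⟨i, Nat.lt_of_succ_lt h⟩ with ha
  set b := σ⁻¹ ⟨i + 1, h⟩ with hb
  have hsa : σ a = ⟨i, Nat.lt_of_succ_lt h⟩ := by rw [ha]; simp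
  have hsb : σ b = ⟨i + 1, h⟩ := by rw [hb]; simp
  constructor
  · ext ⟨x, y⟩
    simp only [mem_invF, Finset.mem_insert, Prod.mk.injEq]
    constructor
    · rintro ⟨hxy, hlt⟩
      by_cases hx : σ x = ⟨i, Nat.lt_of_succ_lt h⟩ ∧ σ y = ⟨i+1, h⟩
      · left
        refine ⟨?_, ?_⟩ <;> [skip; skip]
        · have := hx.1; rw [← hsa] at this; exact σ.injective this
        · have := hx.2; rw [← hsb] at this; exact σ.injective this
      · right
        refine ⟨hxy, ?_⟩
        have hx2 : ¬(σ x = ⟨i+1, h⟩ ∧ σ y = ⟨i, Nat.lt_of_succ_lt h⟩) := by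
          rintro ⟨e1, e2⟩
          rw [← hsb] at e1; rw [← hsa] at e2
          have ex : x = b := σ.injective e1
          have ey : y = a := σ.injective e2
          rw [ex, ey] at hxy
          exact absurd hpq (not_lt.2 hxy.le)
        have := (adj_lt_iff i h (σ y) (σ x)
          (by rintro ⟨e1, e2⟩; exact hx2 ⟨Fin.ext e2, Fin.ext e1⟩)
          (by rintro ⟨e1, e2⟩; exact hx ⟨Fin.ext e2, Fin.ext e1⟩)).mp
        simpa using this hlt
    · rintro (⟨hx, hy⟩ | ⟨hxy, hlt⟩)
      · subst hx; subst hy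
        refine ⟨hpq, ?_⟩
        simp only [Equiv.Perm.mul_apply, hsa, hsb, adj_apply_left, adj_apply_right]
        simp [Fin.lt_def]
      · refine ⟨hxy, ?_⟩
        simp only [Equiv.Perm.mul_apply]
        rcases eq_or_ne (σ x) ⟨i, Nat.lt_of_succ_lt h⟩ with hex | hex
        · -- then x = a, and σ y < σ x = i means σ y < i, unaffected
          have hx' : x = a := σ.injective (by rw [hex, hsa])
          have hy' : (σ y : ℕ) < i := by rw [hex] at hlt; exact hlt
          have hyne : (σ y : ℕ) ≠ i ∧ (σ y : ℕ) ≠ i + 1 := by omega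
          rw [hex, adj_apply_left]
          have hv := adj_val i h (σ y)
          rw [if_neg hyne.1, if_neg hyne.2] at hv
          simp only [Fin.lt_def, hv]; omega
        · apply (adj_lt_iff i h (σ y) (σ x) ?_ ?_).mpr hlt
          · rintro ⟨e1, e2⟩
            -- σ y = i, σ x = i+1 : means y = a, x = b, but x < y and a < b contradiction? 
            have hy' : y = a := σ.injective (by apply Fin.ext; simp [hsa, e1])
            have hx' : x = b := σ.injective (by apply Fin.ext; simp [hsb, e2])
            rw [hx', hy'] at hxy
            exact absurd hpq (not_lt.2 hxy.le)
          · rintro ⟨e1, e2⟩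
            exact hex (Fin.ext e2)
  · simp only [mem_invF, hsa, hsb, not_and]
    intro _
    simp [Fin.lt_def]

lemma card_invF_adj_mul (i : ℕ) (h : i + 1 < n) (σ : Equiv.Perm (Fin n)) :
    (σ⁻¹ ⟨i, Nat.lt_of_succ_lt h⟩ < σ⁻¹ ⟨i + 1, h⟩ ∧
      (invF (adj n i h * σ)).card = (invF σ).card + 1) ∨
    (σ⁻¹ ⟨i + 1, h⟩ < σ⁻¹ ⟨i, Nat.lt_of_succ_lt h⟩ ∧
      (invF σ).card = (invF (adj n i h * σ)).card + 1) := by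
  have hne : σ⁻¹ ⟨i, Nat.lt_of_succ_lt h⟩ ≠ σ⁻¹ ⟨i + 1, h⟩ := by
    intro e
    have h2 : (⟨i, Nat.lt_of_succ_lt h⟩ : Fin n) = ⟨i + 1, h⟩ := σ⁻¹.injective e
    exact absurd (congrArg Fin.val h2) (by simp)
  rcases lt_or_gt_of_ne hne with hlt | hgt
  · left
    refine ⟨hlt, ?_⟩
    obtain ⟨he, hnm⟩ := invF_adj_mul i h σ hlt
    rw [he, Finset.card_insert_of_notMem hnm]
  · right
    refine ⟨hgt, ?_⟩
    -- apply the lemma to τ := adj * σ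
    set τ := adj n i h * σ with hτ
    have hτi : τ⁻¹ ⟨i, Nat.lt_of_succ_lt h⟩ = σ⁻¹ ⟨i + 1, h⟩ := by
      rw [hτ]
      simp only [mul_inv_rev, Equiv.Perm.mul_apply]
      congr 1
      have : (adj n i h)⁻¹ = adj n i h := by
        rw [eq_comm, eq_inv_iff_mul_eq_one, adj_mul_self]
      rw [this, adj_apply_left]
    have hτi1 : τ⁻¹ ⟨i + 1, h⟩ = σ⁻¹ ⟨i, Nat.lt_of_succ_lt h⟩ := by
      rw [hτ]
      simp only [mul_inv_rev, Equiv.Perm.mul_apply]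
      congr 1
      have : (adj n i h)⁻¹ = adj n i h := by
        rw [eq_comm, eq_inv_iff_mul_eq_one, adj_mul_self]
      rw [this, adj_apply_right]
    have hlt' : τ⁻¹ ⟨i, Nat.lt_of_succ_lt h⟩ < τ⁻¹ ⟨i + 1, h⟩ := by
      rw [hτi, hτi1]; exact hgt
    obtain ⟨he, hnm⟩ := invF_adj_mul i h τ hlt'
    have hback : adj n i h * τ = σ := by
      rw [hτ, ← mul_assoc, adj_mul_self, one_mul]
    rw [hback] at he
    rw [he, Finset.card_insert_of_notMem hnm]

lemma card_invF_le_of_list :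
    ∀ l : List (Equiv.Perm (Fin n)), (∀ π ∈ l, IsAdj n π) →
      (invF l.prod).card ≤ l.length := by
  intro l
  induction l with
  | nil =>
    intro _
    simp only [List.prod_nil, List.length_nil, Nat.le_zero, Finset.card_eq_zero]
    ext ⟨x, y⟩
    simp only [mem_invF, Finset.notMem_empty, iff_false, not_and, Equiv.Perm.one_apply]
    exact fun hxy => not_lt.2 hxy.le
  | cons π t ih =>
    intro hl
    obtain ⟨i, h, rfl⟩ := hl π (List.mem_cons_self)
    have ht := ih (fun x hx => hl x (List.mem_cons_of_mem _ hx))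
    rw [List.prod_cons, List.length_cons]
    rcases card_invF_adj_mul i h t.prod with ⟨_, hc⟩ | ⟨_, hc⟩ <;> omega

lemma le_apply_of_strictMono (f : Fin n → Fin n) (h : StrictMono f) (x : Fin n) :
    x ≤ f x := by
  have key : ∀ m : ℕ, ∀ x : Fin n, (x : ℕ) ≤ m → x ≤ f x := by
    intro m
    induction m with
    | zero =>
      intro x hx
      rw [Fin.le_def]
      omega
    | succ m ih =>
      intro x hx
      by_contra hcon
      push_neg at hcon
      have h2 : f (f x) < f x := h hcon
      have h3 : f x ≤ f (f x) := ih (f x) (by rw [Fin.lt_def] at hcon; omega)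
      rw [Fin.lt_def] at h2
      rw [Fin.le_def] at h3
      omega
  exact key (x : ℕ) x le_rfl

lemma perm_eq_one_of_no_inv (σ : Equiv.Perm (Fin n)) (hmono : StrictMono σ) : σ = 1 := by
  have h1 : ∀ x, x ≤ σ x := fun x => le_apply_of_strictMono σ hmono x
  have hmono' : StrictMono ⇑σ⁻¹ := by
    intro a b hab
    rcases lt_trichotomy (σ⁻¹ a) (σ⁻¹ b) with hc | hc | hc
    · exact hc
    · exact absurd (congrArg σ hc) (by simp; omega)
    · have := hmono hc
      simp only [Equiv.Perm.coe_inv, Equiv.apply_symm_apply] at this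
      omega
  have h2 : ∀ x, x ≤ σ⁻¹ x := fun x => le_apply_of_strictMono (⇑σ⁻¹) hmono' x
  ext x
  have := h2 (σ x)
  simp only [Equiv.Perm.coe_inv, Equiv.symm_apply_apply] at this
  have := h1 x
  simp only [Equiv.Perm.one_apply]
  omega

/-- chain helpers -/
lemma chain_lt (f : Fin n → Fin n) (a b : ℕ) (hb : b < n) (hab : a < b)
    (h : ∀ k, a ≤ k → (hk : k < b) → f ⟨k + 1, by omega⟩ < f ⟨k, by omega⟩) :
    f ⟨b, hb⟩ < f ⟨a, by omega⟩ := by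
  induction b with
  | zero => omega
  | succ m ih =>
    rcases eq_or_lt_of_le (Nat.succ_le_of_lt hab) with e | hlt
    · have := h a (le_refl a) (by omega)
      convert this using 3 <;> omega
    · have step := h m (by omega) (by omega)
      have prev := ih (by omega) (by omega) (fun k hk hk2 => h k hk (by omega))
      exact lt_trans step prev

lemma chain_gt (f : Fin n → Fin n) (a b : ℕ) (hb : b < n) (hab : a < b)
    (h : ∀ k, a ≤ k → (hk : k < b) → f ⟨k, by omega⟩ < f ⟨k + 1, by omega⟩) :
    f ⟨a, by omega⟩ < f ⟨b, hb⟩ := by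
  induction b with
  | zero => omega
  | succ m ih =>
    rcases eq_or_lt_of_le (Nat.succ_le_of_lt hab) with e | hlt
    · have := h a (le_refl a) (by omega)
      convert this using 3 <;> omega
    · have step := h m (by omega) (by omega)
      have prev := ih (by omega) (by omega) (fun k hk hk2 => h k hk (by omega))
      exact lt_trans prev step

lemma strictMono_of_adj (f : Fin n → Fin n)
    (h : ∀ k, (hk : k + 1 < n) → f ⟨k, by omega⟩ < f ⟨k + 1, hk⟩) : StrictMono f := by
  intro a b hab
  have := chain_gt f a b b.isLt hab (fun k hk hk2 => by
    have := h k (by omega)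
    convert this using 3)
  convert this using 2 <;> exact (Fin.eta _ _).symm

lemma exists_word (σ : Equiv.Perm (Fin n)) :
    ∃ l : List (Equiv.Perm (Fin n)), (∀ π ∈ l, IsAdj n π) ∧ l.prod = σ ∧
      l.length = (invF σ).card := by
  generalize hc : (invF σ).card = m
  induction m generalizing σ with
  | zero =>
    refine ⟨[], by simp, ?_, by simp⟩
    rw [Finset.card_eq_zero] at hc
    have hmono : StrictMono σ := by
      apply strictMono_of_adj
      intro k hk
      by_contra hcon
      have hne : σ ⟨k, by omega⟩ ≠ σ ⟨k+1, hk⟩ := by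
        simp only [ne_eq, EmbeddingLike.apply_eq_iff_eq]
        intro e; exact absurd (congrArg Fin.val e) (by simp)
      have hlt : σ ⟨k+1, hk⟩ < σ ⟨k, by omega⟩ := by
        rcases lt_or_gt_of_ne hne with h' | h'
        · exact absurd h' hcon
        · exact h'
      have : (⟨⟨k, by omega⟩, ⟨k+1, hk⟩⟩ : Fin n × Fin n) ∈ invF σ := by
        rw [mem_invF]
        exact ⟨by simp [Fin.lt_def], hlt⟩
      rw [hc] at this
      exact absurd this (Finset.notMem_empty _)
    exact (perm_eq_one_of_no_inv σ hmono).symm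
  | succ m ih =>
    -- there is an adjacent value inversion
    have hne1 : σ ≠ 1 := by
      intro e
      rw [e] at hc
      have : invF (1 : Equiv.Perm (Fin n)) = ∅ := by
        ext ⟨x, y⟩
        simp only [mem_invF, Finset.notMem_empty, iff_false, not_and, Equiv.Perm.one_apply]
        exact fun hxy => not_lt.2 hxy.le
      rw [this] at hc
      simp at hc
    have hex : ∃ i, ∃ h : i + 1 < n, σ⁻¹ ⟨i + 1, h⟩ < σ⁻¹ ⟨i, by omega⟩ := by
      by_contra hcon
      push_neg at hcon
      have hmono : StrictMono ⇑σ⁻¹ := by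
        apply strictMono_of_adj
        intro k hk
        have hle := hcon k hk
        have hne : σ⁻¹ ⟨k, by omega⟩ ≠ σ⁻¹ ⟨k+1, hk⟩ := by
          simp only [ne_eq, EmbeddingLike.apply_eq_iff_eq]
          intro e; exact absurd (congrArg Fin.val e) (by simp)
        exact lt_of_le_of_ne hle hne
      have := perm_eq_one_of_no_inv σ⁻¹ hmono
      rw [inv_eq_one] at this
      exact hne1 this
    obtain ⟨i, h, hlt⟩ := hex
    set τ := adj n i h * σ with hτ
    have hback : adj n i h * τ = σ := by rw [hτ, ← mul_assoc, adj_mul_self, one_mul]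
    have hcard : (invF τ).card = m := by
      rcases card_invF_adj_mul i h σ with ⟨h', _⟩ | ⟨h', hc'⟩
      · exact absurd hlt (not_lt.2 h'.le)
      · rw [← hτ] at hc'; omega
    obtain ⟨l, hl, hprod, hlen⟩ := ih τ hcard
    refine ⟨adj n i h :: l, ?_, ?_, ?_⟩
    · intro π hπ
      rcases List.mem_cons.mp hπ with e | hm
      · exact ⟨i, h, e⟩
      · exact hl π hm
    · rw [List.prod_cons, hprod, hback]
    · simp [hlen, hc]

lemma len_eq_card (σ : Equiv.Perm (Fin n)) : len σ = (invF σ).card := by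
  obtain ⟨l, hl, hprod, hlen⟩ := exists_word σ
  apply le_antisymm
  · exact Nat.sInf_le ⟨l, hl, hprod, hlen⟩
  · have hne : {k | ∃ l : List (Equiv.Perm (Fin n)),
        (∀ π ∈ l, IsAdj n π) ∧ l.prod = σ ∧ l.length = k}.Nonempty :=
      ⟨(invF σ).card, l, hl, hprod, hlen⟩
    obtain ⟨l', hl', hprod', hlen'⟩ := Nat.sInf_mem hne
    unfold len
    rw [← hlen', ← hprod']
    exact card_invF_le_of_list l' hl'

lemma adj_inv (i : ℕ) (h : i + 1 < n) : (adj n i h)⁻¹ = adj n i h := by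
  rw [eq_comm, eq_inv_iff_mul_eq_one, adj_mul_self]

lemma card_invF_inv (σ : Equiv.Perm (Fin n)) : (invF σ⁻¹).card = (invF σ).card := by
  apply Finset.card_bij (fun p _ => ((σ⁻¹ p.2 : Fin n), (σ⁻¹ p.1 : Fin n)))
  · rintro ⟨x, y⟩ hm
    rw [mem_invF] at hm ⊢
    obtain ⟨h1, h2⟩ := hm
    refine ⟨h2, ?_⟩
    simp only [Equiv.Perm.coe_inv, Equiv.apply_symm_apply]
    exact h1
  · rintro ⟨x, y⟩ hx ⟨x', y'⟩ hy he
    simp only [Prod.mk.injEq] at he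
    have e1 : y = y' := σ⁻¹.injective he.1
    have e2 : x = x' := σ⁻¹.injective he.2
    rw [Prod.ext_iff]
    exact ⟨e2, e1⟩
  · rintro ⟨u, v⟩ hm
    rw [mem_invF] at hm
    refine ⟨(σ v, σ u), ?_, ?_⟩
    · rw [mem_invF]
      simp only [Equiv.Perm.coe_inv, Equiv.symm_apply_apply]
      exact ⟨hm.2, hm.1⟩
    · simp

lemma len_inv (σ : Equiv.Perm (Fin n)) : len σ⁻¹ = len σ := by
  rw [len_eq_card, len_eq_card, card_invF_inv]

lemma len_adj_mul (i : ℕ) (h : i + 1 < n) (σ : Equiv.Perm (Fin n)) :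
    (σ⁻¹ ⟨i, Nat.lt_of_succ_lt h⟩ < σ⁻¹ ⟨i + 1, h⟩ ∧ len (adj n i h * σ) = len σ + 1) ∨
    (σ⁻¹ ⟨i + 1, h⟩ < σ⁻¹ ⟨i, Nat.lt_of_succ_lt h⟩ ∧ len σ = len (adj n i h * σ) + 1) := by
  rcases card_invF_adj_mul i h σ with ⟨h1, h2⟩ | ⟨h1, h2⟩
  · left; rw [len_eq_card, len_eq_card]; exact ⟨h1, h2⟩
  · right; rw [len_eq_card, len_eq_card]; exact ⟨h1, h2⟩

lemma len_mul_adj (i : ℕ) (h : i + 1 < n) (σ : Equiv.Perm (Fin n)) :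
    (σ ⟨i, Nat.lt_of_succ_lt h⟩ < σ ⟨i + 1, h⟩ ∧ len (σ * adj n i h) = len σ + 1) ∨
    (σ ⟨i + 1, h⟩ < σ ⟨i, Nat.lt_of_succ_lt h⟩ ∧ len σ = len (σ * adj n i h) + 1) := by
  have key : len (σ * adj n i h) = len (adj n i h * σ⁻¹) := by
    rw [← len_inv (σ * adj n i h)]
    rw [mul_inv_rev, adj_inv]
  have := len_adj_mul i h σ⁻¹
  simp only [inv_inv] at this
  rcases this with ⟨h1, h2⟩ | ⟨h1, h2⟩
  · left; rw [key, h2, len_inv]; exact ⟨h1, rfl⟩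
  · right; rw [key, ← h2, len_inv]; exact ⟨h1, rfl⟩

lemma desL_iff (σ : Equiv.Perm (Fin n)) (i : ℕ) :
    i ∈ DesL σ ↔ ∃ h : i + 1 < n, σ⁻¹ ⟨i + 1, h⟩ < σ⁻¹ ⟨i, Nat.lt_of_succ_lt h⟩ := by
  constructor
  · rintro ⟨h, hlen⟩
    refine ⟨h, ?_⟩
    rcases len_adj_mul i h σ with ⟨h1, h2⟩ | ⟨h1, h2⟩
    · omega
    · exact h1
  · rintro ⟨h, hlt⟩
    refine ⟨h, ?_⟩
    rcases len_adj_mul i h σ with ⟨h1, h2⟩ | ⟨h1, h2⟩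
    · exact absurd h1 (not_lt.2 hlt.le)
    · omega

lemma desR_iff (σ : Equiv.Perm (Fin n)) (i : ℕ) :
    i ∈ DesR σ ↔ ∃ h : i + 1 < n, σ ⟨i + 1, h⟩ < σ ⟨i, Nat.lt_of_succ_lt h⟩ := by
  constructor
  · rintro ⟨h, hlen⟩
    refine ⟨h, ?_⟩
    rcases len_mul_adj i h σ with ⟨h1, h2⟩ | ⟨h1, h2⟩
    · omega
    · exact h1
  · rintro ⟨h, hlt⟩
    refine ⟨h, ?_⟩
    rcases len_mul_adj i h σ with ⟨h1, h2⟩ | ⟨h1, h2⟩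
    · exact absurd h1 (not_lt.2 hlt.le)
    · omega

lemma invF_subset_of_leL {σ ρ : Equiv.Perm (Fin n)} (h : leL σ ρ) : invF σ ⊆ invF ρ := by
  induction h with
  | refl => exact subset_rfl
  | tail hab hbc ih =>
    rename_i b c
    obtain ⟨i, hi, hnd, rfl⟩ := hbc
    have hlt : b⁻¹ ⟨i, Nat.lt_of_succ_lt hi⟩ < b⁻¹ ⟨i + 1, hi⟩ := by
      rw [desL_iff] at hnd
      push_neg at hnd
      have hle := hnd hi
      have hne : b⁻¹ ⟨i, Nat.lt_of_succ_lt hi⟩ ≠ b⁻¹ ⟨i + 1, hi⟩ := by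
        simp only [ne_eq, EmbeddingLike.apply_eq_iff_eq]
        intro e; exact absurd (congrArg Fin.val e) (by simp)
      exact lt_of_le_of_ne hle hne
    obtain ⟨he, _⟩ := invF_adj_mul i hi b hlt
    rw [he]
    exact subset_trans ih (Finset.subset_insert _ _)

lemma apply_val_eq_card (σ : Equiv.Perm (Fin n)) (a : Fin n) :
    (σ a : ℕ) = (Finset.univ.filter fun b => σ b < σ a).card := by
  have himg : (Finset.univ.filter fun b => σ b < σ a).image σ = Finset.Iio (σ a) := by
    ext v
    simp only [Finset.mem_image, Finset.mem_filter, Finset.mem_univ, true_and, Finset.mem_Iio]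
    constructor
    · rintro ⟨b, hb, rfl⟩; exact hb
    · intro hv; exact ⟨σ⁻¹ v, by simpa using hv, by simp⟩
  have := Finset.card_image_of_injective
    (Finset.univ.filter fun b => σ b < σ a) σ.injective
  rw [himg] at this
  rw [← this, Fin.card_Iio]

lemma eq_of_invF_eq {σ ρ : Equiv.Perm (Fin n)} (h : invF σ = invF ρ) : σ = ρ := by
  ext x
  have key : ∀ b : Fin n, σ b < σ x ↔ ρ b < ρ x := by
    intro b
    rcases lt_trichotomy b x with hb | hb | hb
    · have h1 : (b, x) ∈ invF σ ↔ (b, x) ∈ invF ρ := by rw [h]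
      rw [mem_invF, mem_invF] at h1
      simp only [hb, true_and] at h1
      constructor
      · intro hlt
        by_contra hcon
        push_neg at hcon
        have hne : ρ x ≠ ρ b := by
          simp only [ne_eq, EmbeddingLike.apply_eq_iff_eq]
          exact fun e => absurd e (ne_of_gt hb)
        have : ρ x < ρ b := lt_of_le_of_ne hcon hne
        exact absurd (h1.mpr this) (not_lt.2 hlt.le)
      · intro hlt
        by_contra hcon
        push_neg at hcon
        have hne : σ x ≠ σ b := by
          simp only [ne_eq, EmbeddingLike.apply_eq_iff_eq]
          exact fun e => absurd e (ne_of_gt hb)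
        have : σ x < σ b := lt_of_le_of_ne hcon hne
        exact absurd (h1.mp this) (not_lt.2 hlt.le)
    · subst hb; simp
    · have h1 : (x, b) ∈ invF σ ↔ (x, b) ∈ invF ρ := by rw [h]
      rw [mem_invF, mem_invF] at h1
      simp only [hb, true_and] at h1
      exact h1
  have hv : (σ x : ℕ) = (ρ x : ℕ) := by
    rw [apply_val_eq_card σ x, apply_val_eq_card ρ x]
    congr 1
    apply Finset.filter_congr
    intro b _
    exact key b
  exact hv

lemma leL_of_subset_aux :
    ∀ (m : ℕ) (σ ρ : Equiv.Perm (Fin n)), (invF ρ \ invF σ).card = m →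
      invF σ ⊆ invF ρ → leL σ ρ := by
  intro m
  induction m using Nat.strong_induction_on with
  | _ m ih =>
    intro σ ρ hm hsub
    by_cases heq : invF σ = invF ρ
    · rw [eq_of_invF_eq heq]
      exact Relation.ReflTransGen.refl
    · have hne : (invF ρ \ invF σ).Nonempty := by
        rw [Finset.sdiff_nonempty]
        intro hcon
        exact heq (Finset.Subset.antisymm hsub hcon)
      obtain ⟨⟨a, b⟩, hmem, hmin⟩ :=
        Finset.exists_min_image (invF ρ \ invF σ) (fun p => (σ p.2 : ℕ) - (σ p.1 : ℕ)) hne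
      rw [Finset.mem_sdiff] at hmem
      obtain ⟨hmemρ, hnmemσ⟩ := hmem
      rw [mem_invF] at hmemρ
      obtain ⟨hab, hρ⟩ := hmemρ
      have hσab : σ a < σ b := by
        rw [mem_invF] at hnmemσ
        push_neg at hnmemσ
        have := hnmemσ hab
        have hne2 : σ a ≠ σ b := by
          simp only [ne_eq, EmbeddingLike.apply_eq_iff_eq]
          exact fun e => absurd e (ne_of_lt hab)
        exact lt_of_le_of_ne this hne2
      -- claim : σ b = σ a + 1
      have hgap : (σ b : ℕ) = (σ a : ℕ) + 1 := by
        by_contra hcon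
        have hgap2 : (σ a : ℕ) + 1 < (σ b : ℕ) := by
          rw [Fin.lt_def] at hσab; omega
        set v : Fin n := ⟨(σ a : ℕ) + 1, by have := (σ b).isLt; omega⟩ with hv
        set c : Fin n := σ⁻¹ v with hc
        have hσc : σ c = v := by rw [hc]; simp
        have hca : c ≠ a := by
          intro e; rw [e] at hσc
          have h9 : (σ a : ℕ) = (σ a : ℕ) + 1 := congrArg Fin.val hσc
          omega
        have hcb : c ≠ b := by
          intro e; rw [e] at hσc
          have h9 : (σ b : ℕ) = (σ a : ℕ) + 1 := congrArg Fin.val hσc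
          omega
        -- helper facts on values
        have hvac : σ a < σ c := by rw [hσc, hv, Fin.lt_def]; simp
        have hvcb : σ c < σ b := by rw [hσc, Fin.lt_def]; exact hgap2
        rcases lt_trichotomy c a with hcases | hcases | hcases
        · -- c < a : (c,a) ∈ invF σ ⊆ invF ρ so ρ a < ρ c ; (c, b) ∈ invF ρ \ invF σ smaller gap
          have h1 : (c, a) ∈ invF σ := by rw [mem_invF]; exact ⟨hcases, hvac⟩
          have h2 := hsub h1
          rw [mem_invF] at h2
          have h3 : (c, b) ∈ invF ρ \ invF σ := by
            rw [Finset.mem_sdiff, mem_invF, mem_invF]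
            refine ⟨⟨lt_trans hcases hab, lt_trans hρ h2.2⟩, ?_⟩
            push_neg
            intro _
            exact hvcb.le
          have := hmin _ h3
          simp only at this
          rw [hσc] at this
          simp only [hv] at this
          rw [Fin.lt_def] at hσab
          omega
        · exact hca hcases
        · rcases lt_trichotomy c b with hcases2 | hcases2 | hcases2
          · -- a < c < b
            have h1 : (a, c) ∉ invF ρ := by
              intro hin
              have h3 : (a, c) ∈ invF ρ \ invF σ := by
                rw [Finset.mem_sdiff]
                refine ⟨hin, ?_⟩
                rw [mem_invF]; push_neg; intro _; exact hvac.le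
              have := hmin _ h3
              simp only at this
              rw [hσc] at this
              simp only [hv] at this
              rw [Fin.lt_def] at hσab
              omega
            have h2 : (c, b) ∉ invF ρ := by
              intro hin
              have h3 : (c, b) ∈ invF ρ \ invF σ := by
                rw [Finset.mem_sdiff]
                refine ⟨hin, ?_⟩
                rw [mem_invF]; push_neg; intro _; exact hvcb.le
              have := hmin _ h3
              simp only at this
              rw [hσc] at this
              simp only [hv] at this
              rw [Fin.lt_def] at hσab
              omega
            rw [mem_invF] at h1 h2
            push_neg at h1 h2
            have e1 := h1 hcases
            have e2 := h2 hcases2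
            have hne1 : ρ a ≠ ρ c := by
              simp only [ne_eq, EmbeddingLike.apply_eq_iff_eq]
              exact fun e => absurd e (ne_of_lt hcases)
            have hne2 : ρ c ≠ ρ b := by
              simp only [ne_eq, EmbeddingLike.apply_eq_iff_eq]
              exact fun e => absurd e (ne_of_lt hcases2)
            have : ρ a < ρ b :=
              lt_trans (lt_of_le_of_ne e1 hne1) (lt_of_le_of_ne e2 hne2)
            exact absurd hρ (not_lt.2 this.le)
          · exact hcb hcases2
          · -- b < c : (b,c) ∈ invF σ ⊆ invF ρ so ρ c < ρ b; (a,c) ∈ invF ρ \ invF σ smaller gap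
            have h1 : (b, c) ∈ invF σ := by
              rw [mem_invF]; exact ⟨hcases2, hvcb⟩
            have h2 := hsub h1
            rw [mem_invF] at h2
            have h3 : (a, c) ∈ invF ρ \ invF σ := by
              rw [Finset.mem_sdiff, mem_invF, mem_invF]
              refine ⟨⟨lt_trans hab hcases2, lt_trans h2.2 hρ⟩, ?_⟩
              push_neg
              intro _
              exact hvac.le
            have := hmin _ h3
            simp only at this
            rw [hσc] at this
            simp only [hv] at this
            rw [Fin.lt_def] at hσab
            omega
      -- now build the cover step
      have hb : ((σ a : ℕ)) + 1 < n := by rw [← hgap]; exact (σ b).isLt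
      set i : ℕ := (σ a : ℕ) with hi
      have hefst : (⟨i, Nat.lt_of_succ_lt hb⟩ : Fin n) = σ a := by apply Fin.ext; simp [hi]
      have hesnd : (⟨i + 1, hb⟩ : Fin n) = σ b := by apply Fin.ext; simp [hgap]
      have hpa : σ⁻¹ ⟨i, Nat.lt_of_succ_lt hb⟩ = a := by rw [hefst]; simp
      have hpb : σ⁻¹ ⟨i + 1, hb⟩ = b := by rw [hesnd]; simp
      have hplt : σ⁻¹ ⟨i, Nat.lt_of_succ_lt hb⟩ < σ⁻¹ ⟨i + 1, hb⟩ := by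
        rw [hpa, hpb]; exact hab
      obtain ⟨he, hnm⟩ := invF_adj_mul i hb σ hplt
      rw [hpa, hpb] at he
      have hnd : i ∉ DesL σ := by
        rw [desL_iff]
        push_neg
        intro h'
        have : σ⁻¹ ⟨i, Nat.lt_of_succ_lt h'⟩ = a := by
          convert hpa using 3
        have h2 : σ⁻¹ ⟨i + 1, h'⟩ = b := by
          convert hpb using 3
        rw [this, h2]
        exact hab.le
      have hcov : covL σ (adj n i hb * σ) := ⟨i, hb, hnd, rfl⟩
      have hsub2 : invF (adj n i hb * σ) ⊆ invF ρ := by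
        rw [he]
        intro p hp
        rcases Finset.mem_insert.mp hp with e | hp2
        · rw [e, mem_invF]; exact ⟨hab, hρ⟩
        · exact hsub hp2
      have hcard : (invF ρ \ invF (adj n i hb * σ)).card < m := by
        rw [he]
        have : invF ρ \ insert (a, b) (invF σ) = (invF ρ \ invF σ).erase (a, b) := by
          ext p
          simp only [Finset.mem_sdiff, Finset.mem_insert, Finset.mem_erase]
          tauto
        rw [this]
        have hmem2 : (a, b) ∈ invF ρ \ invF σ := by
          rw [Finset.mem_sdiff, mem_invF]
          exact ⟨⟨hab, hρ⟩, hnmemσ⟩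
        rw [Finset.card_erase_of_mem hmem2, hm]
        have : 0 < m := by rw [← hm]; exact Finset.card_pos.mpr ⟨_, hmem2⟩
        omega
      have := ih _ hcard (adj n i hb * σ) ρ rfl hsub2
      exact Relation.ReflTransGen.head hcov this

lemma leL_iff_subset {σ ρ : Equiv.Perm (Fin n)} : leL σ ρ ↔ invF σ ⊆ invF ρ :=
  ⟨invF_subset_of_leL, fun h => leL_of_subset_aux _ σ ρ rfl h⟩

open scoped Classical in
noncomputable def ISF (S : Set ℕ) : Finset (Fin n × Fin n) :=
  Finset.univ.filter fun p => p.1 < p.2 ∧ ∀ k : ℕ, (p.1 : ℕ) ≤ k → k < (p.2 : ℕ) → k ∈ S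

open scoped Classical in
noncomputable def JSF (S : Set ℕ) : Finset (Fin n × Fin n) :=
  Finset.univ.filter fun p => p.1 < p.2 ∧ ∃ k : ℕ, (p.1 : ℕ) ≤ k ∧ k < (p.2 : ℕ) ∧ k ∈ S

lemma mem_ISF {S : Set ℕ} {p : Fin n × Fin n} :
    p ∈ ISF S ↔ p.1 < p.2 ∧ ∀ k : ℕ, (p.1 : ℕ) ≤ k → k < (p.2 : ℕ) → k ∈ S := by
  simp [ISF]

lemma mem_JSF {S : Set ℕ} {p : Fin n × Fin n} :
    p ∈ JSF S ↔ p.1 < p.2 ∧ ∃ k : ℕ, (p.1 : ℕ) ≤ k ∧ k < (p.2 : ℕ) ∧ k ∈ S := by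
  simp [JSF]

lemma sandwich (S : Set ℕ) (σ : Equiv.Perm (Fin n)) :
    (∀ k : ℕ, (hk : k + 1 < n) → (σ ⟨k + 1, hk⟩ < σ ⟨k, by omega⟩ ↔ k ∈ S)) ↔
      (ISF S ⊆ invF σ ∧ invF σ ⊆ JSF S) := by
  constructor
  · intro hD
    constructor
    · rintro ⟨a, b⟩ hp
      rw [mem_ISF] at hp
      obtain ⟨hab, hall⟩ := hp
      rw [mem_invF]
      refine ⟨hab, ?_⟩
      have := chain_lt (⇑σ) (a : ℕ) (b : ℕ) b.isLt hab (fun k hk1 hk2 => by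
        have hk3 : k + 1 < n := by have := b.isLt; omega
        exact (hD k hk3).mpr (hall k hk1 hk2))
      simpa using this
    · rintro ⟨a, b⟩ hp
      rw [mem_invF] at hp
      obtain ⟨hab, hinv⟩ := hp
      rw [mem_JSF]
      refine ⟨hab, ?_⟩
      by_contra hcon
      push_neg at hcon
      have := chain_gt (⇑σ) (a : ℕ) (b : ℕ) b.isLt hab (fun k hk1 hk2 => by
        have hk3 : k + 1 < n := by have := b.isLt; omega
        have hns := hcon k hk1 hk2
        have hnd := (hD k hk3).not.mpr hns
        push_neg at hnd
        have hne : σ ⟨k, by omega⟩ ≠ σ ⟨k + 1, hk3⟩ := by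
          simp only [ne_eq, EmbeddingLike.apply_eq_iff_eq]
          intro e; exact absurd (congrArg Fin.val e) (by simp)
        exact lt_of_le_of_ne hnd hne)
      have h2 : σ a < σ b := by simpa using this
      exact absurd hinv (not_lt.2 h2.le)
  · rintro ⟨hIS, hJS⟩ k hk
    constructor
    · intro hdesc
      have hmem : ((⟨k, by omega⟩ : Fin n), (⟨k + 1, hk⟩ : Fin n)) ∈ invF σ := by
        rw [mem_invF]
        exact ⟨by simp [Fin.lt_def], hdesc⟩
      have := hJS hmem
      rw [mem_JSF] at this
      obtain ⟨-, j, hj1, hj2, hj3⟩ := this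
      simp only at hj1 hj2
      have : j = k := by omega
      rwa [this] at hj3
    · intro hS
      have hmem : ((⟨k, by omega⟩ : Fin n), (⟨k + 1, hk⟩ : Fin n)) ∈ ISF S := by
        rw [mem_ISF]
        refine ⟨by simp [Fin.lt_def], ?_⟩
        intro j hj1 hj2
        simp only at hj1 hj2
        have : j = k := by omega
        rwa [this]
      have := hIS hmem
      rw [mem_invF] at this
      exact this.2

lemma parabolic_bound {S : Set ℕ} {u : Equiv.Perm (Fin n)} (hu : u ∈ parabolic n S)
    (k : ℕ) (hk : k ∉ S) : ∀ x : Fin n, (x : ℕ) ≤ k ↔ ((u x : ℕ) ≤ k) := by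
  induction hu using Subgroup.closure_induction with
  | mem π hπ =>
    obtain ⟨i, hiS, hi, rfl⟩ := hπ
    intro x
    have hik : i ≠ k := fun e => hk (e ▸ hiS)
    have := adj_val i hi x
    rw [this]
    split_ifs <;> omega
  | one => intro x; simp
  | mul u v hu hv ihu ihv =>
    intro x
    rw [show ((u * v : Equiv.Perm (Fin n)) x) = u (v x) from rfl]
    rw [ihv x, ihu (v x)]
  | inv u hu ihu =>
    intro x
    have := ihu (u⁻¹ x)
    simp only [Equiv.Perm.coe_inv, Equiv.apply_symm_apply] at this
    exact this.symm

lemma invF_w0_eq (S : Set ℕ) (hS : ∀ i ∈ S, i + 1 < n) (w0 : Equiv.Perm (Fin n))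
    (h0 : IsLongestIn (↑(parabolic n S)) w0) : invF w0 = ISF S := by
  apply Finset.Subset.antisymm
  · rintro ⟨a, b⟩ hp
    rw [mem_invF] at hp
    obtain ⟨hab, hinv⟩ := hp
    dsimp only at hab hinv
    rw [mem_ISF]
    refine ⟨hab, ?_⟩
    intro k hk1 hk2
    dsimp only at hk1 hk2
    by_contra hkS
    have hb := parabolic_bound h0.1 k hkS
    have h1 : (w0 a : ℕ) ≤ k := (hb a).mp hk1
    have h2 : ¬((w0 b : ℕ) ≤ k) := by
      intro hc
      have := (hb b).mpr hc
      omega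
    rw [Fin.lt_def] at hinv
    omega
  · -- first : S gives descents of w0
    have hdes : ∀ k ∈ S, ∀ (hk : k + 1 < n), w0 ⟨k + 1, hk⟩ < w0 ⟨k, by omega⟩ := by
      intro k hkS hk
      have hgen : adj n k hk ∈ parabolic n S :=
        Subgroup.subset_closure ⟨k, hkS, hk, rfl⟩
      have hmul : w0 * adj n k hk ∈ parabolic n S := mul_mem h0.1 hgen
      have hle := h0.2 _ hmul
      rcases len_mul_adj k hk w0 with ⟨h1, h2⟩ | ⟨h1, h2⟩
      · omega
      · exact h1
    rintro ⟨a, b⟩ hp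
    rw [mem_ISF] at hp
    obtain ⟨hab, hall⟩ := hp
    rw [mem_invF]
    refine ⟨hab, ?_⟩
    have := chain_lt (⇑w0) (a : ℕ) (b : ℕ) b.isLt hab (fun k hk1 hk2 => by
      have hk3 : k + 1 < n := by have := b.isLt; omega
      exact hdes k (hall k hk1 hk2) hk3)
    simpa using this

section Wstar

variable (S : Set ℕ)

open scoped Classical in
noncomputable def cnt (a : Fin n) : ℕ :=
  (Finset.univ.filter fun k : Fin n => (a : ℕ) ≤ (k : ℕ) ∧ (k : ℕ) ∈ S).card

lemma cnt_le {a b : Fin n} (hab : (a : ℕ) ≤ (b : ℕ)) : cnt S b ≤ cnt S a := by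
  classical
  apply Finset.card_le_card
  intro x hx
  simp only [Finset.mem_filter, Finset.mem_univ, true_and] at hx ⊢
  exact ⟨le_trans hab hx.1, hx.2⟩

lemma cnt_lt_iff {a b : Fin n} (hab : (a : ℕ) ≤ (b : ℕ)) :
    cnt S b < cnt S a ↔ ∃ k : ℕ, (a : ℕ) ≤ k ∧ k < (b : ℕ) ∧ k ∈ S := by
  classical
  constructor
  · intro h
    by_contra hcon
    push_neg at hcon
    have hsub : (Finset.univ.filter fun k : Fin n => (a : ℕ) ≤ (k : ℕ) ∧ (k : ℕ) ∈ S) ⊆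
        (Finset.univ.filter fun k : Fin n => (b : ℕ) ≤ (k : ℕ) ∧ (k : ℕ) ∈ S) := by
      intro x hx
      simp only [Finset.mem_filter, Finset.mem_univ, true_and] at hx ⊢
      refine ⟨?_, hx.2⟩
      by_contra hxb
      push_neg at hxb
      exact absurd hx.2 (hcon (x : ℕ) hx.1 hxb)
    have := Finset.card_le_card hsub
    unfold cnt at h
    omega
  · rintro ⟨k, hk1, hk2, hk3⟩
    apply Finset.card_lt_card
    rw [Finset.ssubset_iff_of_subset]
    · refine ⟨⟨k, by have := b.isLt; omega⟩, ?_, ?_⟩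
      · simp only [Finset.mem_filter, Finset.mem_univ, true_and]
        exact ⟨hk1, hk3⟩
      · simp only [Finset.mem_filter, Finset.mem_univ, true_and, not_and]
        intro hc
        omega
    · intro x hx
      simp only [Finset.mem_filter, Finset.mem_univ, true_and] at hx ⊢
      exact ⟨le_trans hab hx.1, hx.2⟩

/-- value order for the maximal element with descents in S -/
def prec (x y : Fin n) : Prop :=
  cnt S x < cnt S y ∨ (cnt S x = cnt S y ∧ (x : ℕ) < (y : ℕ))

lemma prec_trans {x y z : Fin n} (h1 : prec S x y) (h2 : prec S y z) : prec S x z := by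
  unfold prec at *
  omega

lemma prec_total {x y : Fin n} (hne : x ≠ y) : prec S x y ∨ prec S y x := by
  have : (x : ℕ) ≠ (y : ℕ) := fun e => hne (Fin.ext e)
  unfold prec
  omega

lemma prec_irrefl (x : Fin n) : ¬prec S x x := by
  unfold prec
  omega

open scoped Classical in
noncomputable def wstarFun (a : Fin n) : Fin n :=
  ⟨(Finset.univ.filter fun x : Fin n => prec S x a).card, by
    have hsub : (Finset.univ.filter fun x : Fin n => prec S x a) ⊆
        Finset.univ.erase a := by
      intro x hx
      simp only [Finset.mem_filter, Finset.mem_univ, true_and] at hx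
      rw [Finset.mem_erase]
      exact ⟨fun e => prec_irrefl S a (e ▸ hx), Finset.mem_univ x⟩
    have := Finset.card_le_card hsub
    rw [Finset.card_erase_of_mem (Finset.mem_univ a), Finset.card_univ, Fintype.card_fin] at this
    have hn : 0 < n := Fin.pos a
    omega⟩

lemma wstarFun_lt {a b : Fin n} (h : prec S a b) : wstarFun S a < wstarFun S b := by
  classical
  rw [Fin.lt_def]
  show (Finset.univ.filter fun x : Fin n => prec S x a).card <
    (Finset.univ.filter fun x : Fin n => prec S x b).card
  apply Finset.card_lt_card
  rw [Finset.ssubset_iff_of_subset]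
  · exact ⟨a, by simp [h], by simp [prec_irrefl S a]⟩
  · intro x hx
    simp only [Finset.mem_filter, Finset.mem_univ, true_and] at hx ⊢
    exact prec_trans S hx h

noncomputable def wstar : Equiv.Perm (Fin n) :=
  Equiv.ofBijective (wstarFun S) (by
    rw [← Finite.injective_iff_bijective]
    intro a b hab
    by_contra hne
    rcases prec_total S hne with h | h
    · exact absurd (congrArg Fin.val hab) (ne_of_lt (wstarFun_lt S h))
    · exact absurd (congrArg Fin.val hab).symm (ne_of_lt (wstarFun_lt S h)))

lemma wstar_lt_iff {a b : Fin n} : wstar S a < wstar S b ↔ prec S a b := by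
  constructor
  · intro h
    by_contra hne
    have hab : a ≠ b := by
      intro e; rw [e] at h; exact absurd h (lt_irrefl _)
    rcases prec_total S hab with h2 | h2
    · exact hne h2
    · have := wstarFun_lt S h2
      show False
      have hw : wstar S a = wstarFun S a := rfl
      have hw2 : wstar S b = wstarFun S b := rfl
      rw [hw, hw2] at h
      exact absurd h (not_lt.2 this.le)
  · intro h
    exact wstarFun_lt S h

lemma invF_wstar : invF (wstar (n := n) S) = JSF S := by
  ext ⟨a, b⟩
  rw [mem_invF, mem_JSF]
  constructor
  · rintro ⟨hab, hinv⟩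
    refine ⟨hab, ?_⟩
    rw [wstar_lt_iff] at hinv
    unfold prec at hinv
    rw [Fin.lt_def] at hab
    rcases hinv with h | h
    · rw [← cnt_lt_iff S hab.le] at *
      exact h
    · omega
  · rintro ⟨hab, hex⟩
    refine ⟨hab, ?_⟩
    rw [wstar_lt_iff]
    unfold prec
    left
    rw [Fin.lt_def] at hab
    rw [cnt_lt_iff S hab.le]
    exact hex

end Wstar

lemma invF_w1_eq (S : Set ℕ) (w1 : Equiv.Perm (Fin n))
    (h1 : IsLongestIn {z : Equiv.Perm (Fin n) | DesR z ⊆ S} w1) : invF w1 = JSF S := by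
  have hsub : invF w1 ⊆ JSF S := by
    rintro ⟨a, b⟩ hp
    rw [mem_invF] at hp
    obtain ⟨hab, hinv⟩ := hp
    rw [mem_JSF]
    refine ⟨hab, ?_⟩
    by_contra hcon
    push_neg at hcon
    have := chain_gt (⇑w1) (a : ℕ) (b : ℕ) b.isLt hab (fun k hk1 hk2 => by
      have hk3 : k + 1 < n := by have := b.isLt; omega
      have hkS : k ∉ S := hcon k hk1 hk2
      have hknd : k ∉ DesR w1 := fun hc => hkS (h1.1 hc)
      rw [desR_iff] at hknd
      push_neg at hknd
      have hle := hknd hk3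
      have hne : w1 ⟨k, by omega⟩ ≠ w1 ⟨k + 1, hk3⟩ := by
        simp only [ne_eq, EmbeddingLike.apply_eq_iff_eq]
        intro e; exact absurd (congrArg Fin.val e) (by simp)
      exact lt_of_le_of_ne hle hne)
    have h2 : w1 a < w1 b := by simpa using this
    exact absurd hinv (not_lt.2 h2.le)
  apply Finset.Subset.antisymm hsub
  -- maximality: card (JSF S) = len (wstar S) ≤ len w1 = card (invF w1)
  have hds : DesR (wstar (n := n) S) ⊆ S := by
    intro k hk
    rw [desR_iff] at hk
    obtain ⟨hk1, hk2⟩ := hk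
    have : ((⟨k, by omega⟩ : Fin n), (⟨k + 1, hk1⟩ : Fin n)) ∈ invF (wstar (n := n) S) := by
      rw [mem_invF]
      exact ⟨by simp [Fin.lt_def], hk2⟩
    rw [invF_wstar] at this
    rw [mem_JSF] at this
    obtain ⟨-, j, hj1, hj2, hj3⟩ := this
    simp only at hj1 hj2
    have : j = k := by omega
    rwa [this] at hj3
  have hlen := h1.2 _ hds
  rw [len_eq_card, len_eq_card, invF_wstar] at hlen
  rw [Finset.eq_of_subset_of_card_le hsub hlen]

section Comp

variable (α : Composition n)

/-- ℕ-valued column index. -/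
noncomputable def idx (a : ℕ) : ℕ := if h : a < n then (α.index ⟨a, h⟩ : ℕ) else 0

lemma val_index (k : Fin n) : (α.index k : ℕ) = idx α (k : ℕ) := by
  unfold idx
  rw [dif_pos k.isLt]

lemma sizeUpTo_idx_le (a : ℕ) (ha : a < n) : α.sizeUpTo (idx α a) ≤ a := by
  unfold idx
  rw [dif_pos ha]
  exact α.sizeUpTo_index_le ⟨a, ha⟩

lemma lt_sizeUpTo_idx_succ (a : ℕ) (ha : a < n) : a < α.sizeUpTo (idx α a + 1) := by
  unfold idx
  rw [dif_pos ha]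
  exact α.lt_sizeUpTo_index_succ ⟨a, ha⟩

lemma idx_lt_length (a : ℕ) (ha : a < n) : idx α a < α.length := by
  unfold idx
  rw [dif_pos ha]
  exact (α.index ⟨a, ha⟩).isLt

lemma index_eq_iff (a t : ℕ) (ha : a < n) (ht : t < α.length) :
    idx α a = t ↔ α.sizeUpTo t ≤ a ∧ a < α.sizeUpTo (t + 1) := by
  constructor
  · intro h
    refine ⟨?_, ?_⟩
    · rw [← h]; exact sizeUpTo_idx_le α a ha
    · rw [← h]; exact lt_sizeUpTo_idx_succ α a ha
  · rintro ⟨h1, h2⟩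
    have ha1 := sizeUpTo_idx_le α a ha
    have hb1 := lt_sizeUpTo_idx_succ α a ha
    rcases lt_trichotomy (idx α a) t with hc | hc | hc
    · have := α.monotone_sizeUpTo (show idx α a + 1 ≤ t by omega)
      omega
    · exact hc
    · have := α.monotone_sizeUpTo (show t + 1 ≤ idx α a by omega)
      omega

lemma index_succ_cases (k : ℕ) (hk : k + 1 < n) :
    idx α (k + 1) = idx α k ∨ idx α (k + 1) = idx α k + 1 := by
  have h1 : α.sizeUpTo (idx α k) ≤ k := sizeUpTo_idx_le α k (by omega)
  have h2 : k < α.sizeUpTo (idx α k + 1) := lt_sizeUpTo_idx_succ α k (by omega)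
  have h3 : α.sizeUpTo (idx α (k + 1)) ≤ k + 1 := sizeUpTo_idx_le α (k + 1) hk
  have h4 : k + 1 < α.sizeUpTo (idx α (k + 1) + 1) := lt_sizeUpTo_idx_succ α (k + 1) hk
  have hjlen : idx α (k + 1) < α.length := idx_lt_length α (k + 1) hk
  have hnlt : ¬(idx α (k + 1) < idx α k) := by
    intro hc
    have := α.monotone_sizeUpTo (show idx α (k + 1) + 1 ≤ idx α k by omega)
    omega
  have hnge : ¬(idx α k + 2 ≤ idx α (k + 1)) := by
    intro hc
    have hm1 := α.monotone_sizeUpTo (show idx α k + 2 ≤ idx α (k + 1) by omega)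
    have hm2 : α.sizeUpTo (idx α k + 1) < α.sizeUpTo (idx α k + 2) :=
      α.sizeUpTo_strict_mono (show idx α k + 1 < α.length by omega)
    omega
  omega

lemma setOf0_iff (k : ℕ) (hk : k + 1 < n) :
    k ∈ setOf0 α ↔ idx α (k + 1) = idx α k + 1 := by
  constructor
  · rintro ⟨j0, hj0, heq⟩
    have hstrict := α.sizeUpTo_strict_mono (show j0 < α.length by omega)
    have hstrict2 := α.sizeUpTo_strict_mono (show j0 + 1 < α.length from hj0)
    have hidx1 : idx α k = j0 := by
      rw [index_eq_iff α k j0 (by omega) (by omega)]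
      omega
    have hidx2 : idx α (k + 1) = j0 + 1 := by
      rw [index_eq_iff α (k + 1) (j0 + 1) hk hj0]
      omega
    omega
  · intro h
    have h1 : α.sizeUpTo (idx α k) ≤ k := sizeUpTo_idx_le α k (by omega)
    have h2 : k < α.sizeUpTo (idx α k + 1) := lt_sizeUpTo_idx_succ α k (by omega)
    have h3 : α.sizeUpTo (idx α k + 1) ≤ k + 1 := by
      have := sizeUpTo_idx_le α (k + 1) hk
      rw [h] at this
      exact this
    have hlen : idx α k + 1 < α.length := by
      have := idx_lt_length α (k + 1) hk
      omega
    exact ⟨idx α k, hlen, by omega⟩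

lemma index_mono (a b : ℕ) (hb : b < n) (hab : a ≤ b) : idx α a ≤ idx α b := by
  have h1 : α.sizeUpTo (idx α a) ≤ a := sizeUpTo_idx_le α a (by omega)
  have h2 : b < α.sizeUpTo (idx α b + 1) := lt_sizeUpTo_idx_succ α b hb
  by_contra hc
  push_neg at hc
  have := α.monotone_sizeUpTo (show idx α b + 1 ≤ idx α a by omega)
  omega

lemma index_le_add (k d : ℕ) (h : k + d < n) : idx α (k + d) ≤ idx α k + d := by
  induction d with
  | zero => simp
  | succ d ih =>
    have h2 := index_succ_cases α (k + d) (by omega)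
    have h3 := ih (by omega)
    have : k + (d + 1) = k + d + 1 := by omega
    rw [this]
    omega

lemma index_steps (k d : ℕ) (h : k + d < n)
    (heq : idx α (k + d) = idx α k + d) :
    ∀ e, e < d → idx α (k + e + 1) = idx α (k + e) + 1 := by
  induction d with
  | zero => omega
  | succ d ih =>
    have hcast : k + (d + 1) = k + d + 1 := by omega
    rw [hcast] at heq
    have hstep := index_succ_cases α (k + d) (by omega)
    have hle := index_le_add α k d (by omega)
    have heq2 : idx α (k + d) = idx α k + d := by omega
    intro e he
    rcases Nat.lt_or_ge e d with he2 | he2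
    · exact ih (by omega) heq2 e he2
    · have he3 : e = d := by omega
      subst he3
      omega

lemma slotPos_eq (k : Fin n) : slotPos α k = (idx α (k : ℕ), n - 1 + idx α (k : ℕ) - (k : ℕ)) := by
  unfold slotPos
  rw [val_index]

lemma slotPos_inj : Function.Injective (slotPos α) := by
  intro x y h
  rw [slotPos_eq, slotPos_eq, Prod.ext_iff] at h
  obtain ⟨h1, h2⟩ := h
  simp only at h1 h2
  have hx := x.isLt
  have hy := y.isLt
  apply Fin.ext
  omega

end Comp

lemma slot_fst (α : Composition n) (a : ℕ) (ha : a < n) :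
    (slotPos α ⟨a, ha⟩).1 = idx α a := by rw [slotPos_eq]

lemma slot_snd (α : Composition n) (a : ℕ) (ha : a < n) :
    (slotPos α ⟨a, ha⟩).2 = n - 1 + idx α a - a := by rw [slotPos_eq]

lemma lhs_iff (α : Composition n) (σ : Equiv.Perm (Fin n)) :
    (∃ pos : Fin n → ℕ × ℕ, IsSRT α pos ∧ ∀ k : Fin n, pos (σ k) = slotPos α k) ↔
    (∀ k : ℕ, (hk : k + 1 < n) →
      (σ ⟨k + 1, hk⟩ < σ ⟨k, by omega⟩ ↔ (k + 1 < n ∧ k ∉ setOf0 α))) := by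
  constructor
  · rintro ⟨pos, ⟨hinj, hrange, hrow, hcol⟩, hcompat⟩ k hk
    have hkey : ∀ u v : Fin n,
        (((slotPos α u).1 = (slotPos α v).1 ∧ (slotPos α u).2 < (slotPos α v).2) ∨
         ((slotPos α u).2 = (slotPos α v).2 ∧ (slotPos α u).1 < (slotPos α v).1)) →
        σ u < σ v := by
      intro u v hcase
      have hu : pos (σ u) = slotPos α u := hcompat u
      have hv : pos (σ v) = slotPos α v := hcompat v
      rcases hcase with ⟨h1, h2⟩ | ⟨h1, h2⟩
      · exact hcol (σ u) (σ v) (by rw [hu, hv]; exact h1) (by rw [hu, hv]; exact h2)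
      · exact hrow (σ u) (σ v) (by rw [hu, hv]; exact h1) (by rw [hu, hv]; exact h2)
    rcases index_succ_cases α k hk with hsame | hnext
    · have hdesc : σ ⟨k + 1, hk⟩ < σ ⟨k, by omega⟩ := by
        apply hkey
        left
        rw [slot_fst, slot_fst, slot_snd, slot_snd]
        omega
      constructor
      · intro _
        refine ⟨hk, fun hmem => ?_⟩
        rw [setOf0_iff α k hk] at hmem
        omega
      · intro _
        exact hdesc
    · have hasc : σ ⟨k, by omega⟩ < σ ⟨k + 1, hk⟩ := by
        apply hkey
        right
        rw [slot_fst, slot_fst, slot_snd, slot_snd]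
        omega
      constructor
      · intro hd
        exact absurd hd (not_lt.2 hasc.le)
      · rintro ⟨-, hns⟩
        exact absurd ((setOf0_iff α k hk).mpr hnext) hns
  · intro hD
    refine ⟨slotPos α ∘ ⇑σ⁻¹, ⟨(slotPos_inj α).comp σ⁻¹.injective,
      σ⁻¹.surjective.range_comp _, ?_, ?_⟩, fun k => by simp⟩
    · -- rows
      intro a b h1 h2
      simp only [Function.comp_apply] at h1 h2
      set x := σ⁻¹ a with hx
      set y := σ⁻¹ b with hy
      have hax : a = σ x := by rw [hx]; simp
      have hby : b = σ y := by rw [hy]; simp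
      rw [hax, hby]
      have hex : slotPos α x = slotPos α ⟨(x : ℕ), x.isLt⟩ := by simp
      have hey : slotPos α y = slotPos α ⟨(y : ℕ), y.isLt⟩ := by simp
      rw [hex, hey] at h1 h2
      rw [slot_snd, slot_snd] at h1
      rw [slot_fst, slot_fst] at h2
      have hxn := x.isLt
      have hyn := y.isLt
      have hd1 : (x : ℕ) < (y : ℕ) ∧ (y : ℕ) - (x : ℕ) = idx α (y : ℕ) - idx α (x : ℕ) := by
        constructor
        · by_contra hc
          push_neg at hc
          have := index_mono α (y : ℕ) (x : ℕ) x.isLt hc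
          omega
        · omega
      obtain ⟨hxy, hdiff⟩ := hd1
      set d : ℕ := (y : ℕ) - (x : ℕ) with hdd
      have hsum : (x : ℕ) + d = (y : ℕ) := by omega
      have heq9 : idx α ((x : ℕ) + d) = idx α (x : ℕ) + d := by
        rw [hsum]
        have := index_le_add α (x : ℕ) d (by omega)
        omega
      have hsteps := index_steps α (x : ℕ) d (by omega) heq9
      have hchain := chain_gt (⇑σ) (x : ℕ) (y : ℕ) y.isLt hxy (fun m hm1 hm2 => by
        have hm3 : m + 1 < n := by omega
        have hstep := hsteps (m - (x : ℕ)) (by omega)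
        rw [show (x : ℕ) + (m - (x : ℕ)) = m from by omega] at hstep
        have hmem : m ∈ setOf0 α := (setOf0_iff α m hm3).mpr hstep
        have hiff := hD m hm3
        have hnd : ¬(σ ⟨m + 1, hm3⟩ < σ ⟨m, by omega⟩) := fun hc =>
          ((hiff.mp hc).2) hmem
        push_neg at hnd
        have hne : σ ⟨m, by omega⟩ ≠ σ ⟨m + 1, hm3⟩ := by
          simp only [ne_eq, EmbeddingLike.apply_eq_iff_eq]
          intro e; exact absurd (congrArg Fin.val e) (by simp)
        exact lt_of_le_of_ne hnd hne)
      have hfin : σ ⟨(x : ℕ), x.isLt⟩ < σ ⟨(y : ℕ), y.isLt⟩ := by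
        convert hchain using 3
      simpa using hfin
    · -- columns
      intro a b h1 h2
      simp only [Function.comp_apply] at h1 h2
      set x := σ⁻¹ a with hx
      set y := σ⁻¹ b with hy
      have hax : a = σ x := by rw [hx]; simp
      have hby : b = σ y := by rw [hy]; simp
      rw [hax, hby]
      have hex : slotPos α x = slotPos α ⟨(x : ℕ), x.isLt⟩ := by simp
      have hey : slotPos α y = slotPos α ⟨(y : ℕ), y.isLt⟩ := by simp
      rw [hex, hey] at h1 h2
      rw [slot_fst, slot_fst] at h1
      rw [slot_snd, slot_snd] at h2
      have hxn := x.isLt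
      have hyn := y.isLt
      have hyx : (y : ℕ) < (x : ℕ) := by omega
      have hchain := chain_lt (⇑σ) (y : ℕ) (x : ℕ) x.isLt hyx (fun m hm1 hm2 => by
        have hm3 : m + 1 < n := by omega
        have hle1 := index_mono α (y : ℕ) m (by omega) hm1
        have hle2 := index_mono α m (x : ℕ) x.isLt (by omega)
        have hle3 := index_mono α (y : ℕ) (m + 1) (by omega) (by omega)
        have hle4 := index_mono α (m + 1) (x : ℕ) x.isLt (by omega)
        have hnmem : m ∉ setOf0 α := by
          rw [setOf0_iff α m hm3]
          omega
        have hiff := hD m hm3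
        exact hiff.mpr ⟨hm3, hnmem⟩)
      have hfin : σ ⟨(x : ℕ), x.isLt⟩ < σ ⟨(y : ℕ), y.isLt⟩ := by
        convert hchain using 3
      simpa using hfin

end St17

/-- The set of column reading words of standard ribbon tableaux of
shape `α` equals the left weak Bruhat interval `[w₀(set(α)ᶜ), w₁(set(α)ᶜ)]_L`. -/
theorem stmt17 (n : ℕ) (hn : 0 < n) (α : Composition n)
    (w0S w1S : Equiv.Perm (Fin n))
    (h0 : IsLongestIn (↑(parabolic n {i | i + 1 < n ∧ i ∉ setOf0 α})) w0S)
    (h1 : IsLongestIn {z | DesR z ⊆ {i | i + 1 < n ∧ i ∉ setOf0 α}} w1S) :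
    {σ : Equiv.Perm (Fin n) | ∃ pos : Fin n → ℕ × ℕ,
        IsSRT α pos ∧ ∀ k : Fin n, pos (σ k) = slotPos α k} =
      intervalL w0S w1S := by
  classical
  set S : Set ℕ := {i | i + 1 < n ∧ i ∉ setOf0 α} with hSdef
  have hS : ∀ i ∈ S, i + 1 < n := fun i hi => hi.1
  have h0' := St17.invF_w0_eq S hS w0S h0
  have h1' := St17.invF_w1_eq S w1S h1
  ext σ
  simp only [Set.mem_setOf_eq]
  rw [St17.lhs_iff]
  have hsand := St17.sandwich S σ
  constructor
  · intro hD
    have hsub := hsand.mp (fun k hk => hD k hk)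
    constructor
    · rw [St17.leL_iff_subset, h0']
      exact hsub.1
    · rw [St17.leL_iff_subset, h1']
      exact hsub.2
  · rintro ⟨hl1, hl2⟩
    rw [St17.leL_iff_subset, h0'] at hl1
    rw [St17.leL_iff_subset, h1'] at hl2
    exact fun k hk => (hsand.mpr ⟨hl1, hl2⟩) k hk
end
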